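/- arXiv:2111.05816 — 8 statements merged into one kernel-verified Lean document; each statement's English description precedes it below -/
import Mathlib

section
/- For any finite graph G, the vertex conductance is at most four times the matching conductance: Ψ*(G) ≤ 4·Υ*(G). -/
open Finset
open scoped Classical

/-- Maximum size of a matching among edges of `G` crossing from `S` to its complement. -/
noncomputable def cutMatchNum {V : Type*} [Fintype V] (G : SimpleGraph V) (S : Finset V) : ℕ :=
  sSup {n : ℕ | ∃ M : Finset (V × V),
    (∀ p ∈ M, p.1 ∈ S ∧ p.2 ∉ S ∧ G.Adj p.1 p.2) ∧
    (∀ p ∈ M, ∀ q ∈ M, p ≠ q → p.1 ≠ q.1 ∧ p.1 ≠ q.2 ∧ p.2 ≠ q.1 ∧ p.2 ≠ q.2) ∧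
    M.card = n}

/-- The vertex boundary of `S`: vertices outside `S` adjacent to a vertex of `S`. -/
noncomputable def vtxBoundary {V : Type*} [Fintype V] (G : SimpleGraph V) (S : Finset V) :
    Finset V :=
  univ.filter (fun y => y ∉ S ∧ ∃ x ∈ S, G.Adj x y)

/-- Matching conductance Υ*(G). -/
noncomputable def matchCond {V : Type*} [Fintype V] (G : SimpleGraph V) : ℝ :=
  sInf {r : ℝ | ∃ S : Finset V, S.Nonempty ∧ 2 * S.card ≤ Fintype.card V ∧
    r = (cutMatchNum G S : ℝ) / S.card}

/-- Vertex conductance Ψ*(G). -/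
noncomputable def vertexCond {V : Type*} [Fintype V] (G : SimpleGraph V) : ℝ :=
  sInf {r : ℝ | ∃ S : Finset V, S.Nonempty ∧ 2 * S.card ≤ Fintype.card V ∧
    r = ((vtxBoundary G S).card : ℝ) / S.card}

/-- There is a maximum cut matching. -/
lemma cutMatchNum_exists {V : Type*} [Fintype V] (G : SimpleGraph V) (S : Finset V) :
    ∃ M : Finset (V × V),
      (∀ p ∈ M, p.1 ∈ S ∧ p.2 ∉ S ∧ G.Adj p.1 p.2) ∧
      (∀ p ∈ M, ∀ q ∈ M, p ≠ q → p.1 ≠ q.1 ∧ p.1 ≠ q.2 ∧ p.2 ≠ q.1 ∧ p.2 ≠ q.2) ∧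
      M.card = cutMatchNum G S ∧
      ∀ (M' : Finset (V × V)),
        (∀ p ∈ M', p.1 ∈ S ∧ p.2 ∉ S ∧ G.Adj p.1 p.2) →
        (∀ p ∈ M', ∀ q ∈ M', p ≠ q → p.1 ≠ q.1 ∧ p.1 ≠ q.2 ∧ p.2 ≠ q.1 ∧ p.2 ≠ q.2) →
        M'.card ≤ cutMatchNum G S := by
  classical
  set T := {n : ℕ | ∃ M : Finset (V × V),
    (∀ p ∈ M, p.1 ∈ S ∧ p.2 ∉ S ∧ G.Adj p.1 p.2) ∧
    (∀ p ∈ M, ∀ q ∈ M, p ≠ q → p.1 ≠ q.1 ∧ p.1 ≠ q.2 ∧ p.2 ≠ q.1 ∧ p.2 ≠ q.2) ∧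
    M.card = n} with hT
  have hzero : (0 : ℕ) ∈ T := ⟨∅, by simp, by simp, by simp⟩
  have hbdd : BddAbove T := by
    refine ⟨Fintype.card (V × V), ?_⟩
    rintro n ⟨M, -, -, rfl⟩
    simpa using M.card_le_univ
  have hmem : sSup T ∈ T := Nat.sSup_mem ⟨0, hzero⟩ hbdd
  obtain ⟨M, h1, h2, h3⟩ := hmem
  refine ⟨M, h1, h2, h3, ?_⟩
  intro M' hM1 hM2
  exact le_csSup hbdd ⟨M', hM1, hM2, rfl⟩

lemma vertexCond_nonneg_mem {V : Type*} [Fintype V] (G : SimpleGraph V) :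
    BddBelow {r : ℝ | ∃ S : Finset V, S.Nonempty ∧ 2 * S.card ≤ Fintype.card V ∧
      r = ((vtxBoundary G S).card : ℝ) / S.card} := by
  refine ⟨0, ?_⟩
  rintro r ⟨S, -, -, rfl⟩
  positivity

lemma vertexCond_le_elem {V : Type*} [Fintype V] (G : SimpleGraph V) (S : Finset V)
    (hS : S.Nonempty) (hcard : 2 * S.card ≤ Fintype.card V) :
    vertexCond G ≤ ((vtxBoundary G S).card : ℝ) / S.card := by
  exact csInf_le (vertexCond_nonneg_mem G) ⟨S, hS, hcard, rfl⟩

lemma key_ineq {V : Type*} [Fintype V] (G : SimpleGraph V) (S : Finset V)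
    (hS : S.Nonempty) (hcard : 2 * S.card ≤ Fintype.card V) :
    vertexCond G ≤ 4 * ((cutMatchNum G S : ℝ) / S.card) := by
  classical
  obtain ⟨M, hM1, hM2, hMcard, hMmax⟩ := cutMatchNum_exists G S
  set ν := cutMatchNum G S with hν
  have hSpos : 0 < S.card := card_pos.2 hS
  by_cases hbig : 2 * ν ≤ S.card
  · -- small matching case: remove matched vertices of S
    set A := M.image Prod.fst with hA
    set B := M.image Prod.snd with hB
    have hAcard : A.card ≤ ν := by rw [← hMcard]; exact card_image_le
    have hBcard : B.card ≤ ν := by rw [← hMcard]; exact card_image_le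
    have hAS : A ⊆ S := by
      intro a ha
      obtain ⟨p, hp, rfl⟩ := mem_image.1 ha
      exact (hM1 p hp).1
    set S' := S \ A with hS'
    have hS'card : S'.card = S.card - A.card := card_sdiff_of_subset hAS
    have hνlt : ν < S.card := by omega
    have hS'pos : 0 < S'.card := by omega
    have hS'ne : S'.Nonempty := card_pos.1 hS'pos
    have hS'sub : S' ⊆ S := sdiff_subset
    have hS'half : 2 * S'.card ≤ Fintype.card V :=
      le_trans (by have := card_le_card hS'sub; omega) hcard
    -- maximality: every cut edge touches the matching
    have hmax : ∀ x ∈ S, ∀ y, y ∉ S → G.Adj x y → x ∈ A ∨ y ∈ B := by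
      intro x hx y hy hadj
      by_contra hcon
      push_neg at hcon
      obtain ⟨hxA, hyB⟩ := hcon
      have hxy : (x, y) ∉ M := fun h => hxA (mem_image_of_mem _ h)
      have hdist : ∀ q ∈ M, x ≠ q.1 ∧ x ≠ q.2 ∧ y ≠ q.1 ∧ y ≠ q.2 := by
        intro q hq
        obtain ⟨hq1, hq2, -⟩ := hM1 q hq
        refine ⟨fun h => hxA ?_, fun h => hq2 ?_, fun h => hy ?_, fun h => hyB ?_⟩
        · exact h ▸ mem_image_of_mem _ hq
        · exact h ▸ hx
        · exact h ▸ hq1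
        · exact h ▸ mem_image_of_mem _ hq
      have h1' : ∀ p ∈ insert (x, y) M, p.1 ∈ S ∧ p.2 ∉ S ∧ G.Adj p.1 p.2 := by
        intro p hp
        rcases mem_insert.1 hp with h | h
        · subst h; exact ⟨hx, hy, hadj⟩
        · exact hM1 p h
      have h2' : ∀ p ∈ insert (x, y) M, ∀ q ∈ insert (x, y) M, p ≠ q →
          p.1 ≠ q.1 ∧ p.1 ≠ q.2 ∧ p.2 ≠ q.1 ∧ p.2 ≠ q.2 := by
        intro p hp q hq hpq
        rcases mem_insert.1 hp with hp' | hp' <;> rcases mem_insert.1 hq with hq' | hq'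
        · exact absurd (hp'.trans hq'.symm) hpq
        · subst hp'; exact hdist q hq'
        · subst hq'
          obtain ⟨e1, e2, e3, e4⟩ := hdist p hp'
          exact ⟨e1.symm, e3.symm, e2.symm, e4.symm⟩
        · exact hM2 p hp' q hq' hpq
      have := hMmax _ h1' h2'
      rw [card_insert_of_notMem hxy, hMcard] at this
      omega
    -- boundary of S' is inside A ∪ B
    have hbdy : vtxBoundary G S' ⊆ A ∪ B := by
      intro y hy
      rw [vtxBoundary, mem_filter] at hy
      obtain ⟨-, hyS', x, hx, hadj⟩ := hy
      have hxS : x ∈ S := (mem_sdiff.1 hx).1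
      have hxA : x ∉ A := (mem_sdiff.1 hx).2
      by_cases hyS : y ∈ S
      · refine mem_union_left _ ?_
        by_contra h
        exact hyS' (mem_sdiff.2 ⟨hyS, h⟩)
      · rcases hmax x hxS y hyS hadj with h | h
        · exact absurd h hxA
        · exact mem_union_right _ h
    have hbd : (vtxBoundary G S').card ≤ 2 * ν := by
      have := card_le_card hbdy
      have h2 := card_union_le A B
      omega
    refine le_trans (vertexCond_le_elem G S' hS'ne hS'half) ?_
    rw [mul_div_assoc'] at *
    rw [div_le_div_iff₀ (by exact_mod_cast hS'pos) (by exact_mod_cast hSpos)]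
    have c1 : ((vtxBoundary G S').card : ℝ) ≤ 2 * ν := by exact_mod_cast hbd
    have c2 : (S.card : ℝ) ≤ S'.card + ν := by
      have : S.card ≤ S'.card + ν := by omega
      exact_mod_cast this
    have c3 : (2 : ℝ) * ν ≤ S.card := by exact_mod_cast hbig
    have c4 : (0 : ℝ) < S'.card := by exact_mod_cast hS'pos
    have c5 : (0 : ℝ) ≤ ν := by positivity
    nlinarith [mul_le_mul_of_nonneg_right c1 (le_of_lt (show (0:ℝ) < S.card by exact_mod_cast hSpos))]
  · -- large matching case: any set of half the vertices works
    push_neg at hbig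
    have hn2 : 2 ≤ Fintype.card V := by omega
    obtain ⟨T, hTsub, hTcard⟩ := exists_subset_card_eq (s := (univ : Finset V)) (n := Fintype.card V / 2)
      (by rw [card_univ]; exact Nat.div_le_self _ _)
    have hTpos : 0 < T.card := by omega
    have hTne : T.Nonempty := card_pos.1 hTpos
    have hThalf : 2 * T.card ≤ Fintype.card V := by omega
    have hTbdy : vtxBoundary G T ⊆ univ \ T := by
      intro y hy
      rw [vtxBoundary, mem_filter] at hy
      exact mem_sdiff.2 ⟨mem_univ _, hy.2.1⟩
    have hTbd : (vtxBoundary G T).card ≤ 2 * T.card := by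
      have h1 := card_le_card hTbdy
      rw [card_sdiff_of_subset (subset_univ T), card_univ] at h1
      omega
    refine le_trans (vertexCond_le_elem G T hTne hThalf) ?_
    have step1 : ((vtxBoundary G T).card : ℝ) / T.card ≤ 2 := by
      rw [div_le_iff₀ (by exact_mod_cast hTpos)]
      exact_mod_cast hTbd
    refine le_trans step1 ?_
    rw [mul_div_assoc', le_div_iff₀ (by exact_mod_cast hSpos)]
    have : 2 * S.card ≤ 4 * ν := by omega
    exact_mod_cast this

theorem vertexCond_le_four_mul_matchCond {V : Type*} [Fintype V] (G : SimpleGraph V) :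
    vertexCond G ≤ 4 * matchCond G := by
  classical
  by_cases hn : ∃ S : Finset V, S.Nonempty ∧ 2 * S.card ≤ Fintype.card V
  · obtain ⟨S₀, hS₀, hS₀c⟩ := hn
    have hne : ((cutMatchNum G S₀ : ℝ) / S₀.card) ∈
        {r : ℝ | ∃ S : Finset V, S.Nonempty ∧ 2 * S.card ≤ Fintype.card V ∧
          r = (cutMatchNum G S : ℝ) / S.card} := ⟨S₀, hS₀, hS₀c, rfl⟩
    have hlow : vertexCond G / 4 ≤ matchCond G := by
      refine le_csInf ⟨_, hne⟩ ?_
      rintro r ⟨S, h1, h2, rfl⟩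
      have := key_ineq G S h1 h2
      linarith
    linarith
  · have e1 : {r : ℝ | ∃ S : Finset V, S.Nonempty ∧ 2 * S.card ≤ Fintype.card V ∧
        r = ((vtxBoundary G S).card : ℝ) / S.card} = ∅ := by
      rw [Set.eq_empty_iff_forall_notMem]
      rintro r ⟨S, h1, h2, -⟩
      exact hn ⟨S, h1, h2⟩
    have e2 : {r : ℝ | ∃ S : Finset V, S.Nonempty ∧ 2 * S.card ≤ Fintype.card V ∧
        r = (cutMatchNum G S : ℝ) / S.card} = ∅ := by
      rw [Set.eq_empty_iff_forall_notMem]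
      rintro r ⟨S, h1, h2, -⟩
      exact hn ⟨S, h1, h2⟩
    rw [vertexCond, matchCond, e1, e2, Real.sInf_empty]
    norm_num
end

section
/- Let G be a finite weighted undirected graph with nonnegative edge weights, and let G⃗ be any orientation of G (each undirected edge replaced by a directed edge with the same weight). Then the maximum weight of a directed matching in G⃗ is at most 4 times the maximum weight of an (undirected) matching in G. -/
open Finset

/-- Greedy extraction: any directed matching `M` contains an undirected matching `N`
with at least a quarter of the weight. -/
lemma directed_matching_extract {V : Type*} [DecidableEq V] (w : V × V → ℝ) :
    ∀ M : Finset (V × V), (∀ p ∈ M, 0 ≤ w p) →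
      (∀ p ∈ M, ∀ q ∈ M, p ≠ q → p.1 ≠ q.1 ∧ p.2 ≠ q.2) →
      ∃ N ⊆ M, (∀ p ∈ N, ∀ q ∈ N, p ≠ q → p.1 ≠ q.1 ∧ p.1 ≠ q.2 ∧ p.2 ≠ q.1 ∧ p.2 ≠ q.2) ∧
        ∑ p ∈ M, w p ≤ 4 * ∑ p ∈ N, w p := by
  intro M
  induction M using Finset.strongInduction with
  | _ M ih =>
    intro hw hmatch
    rcases M.eq_empty_or_nonempty with rfl | hne
    · exact ⟨∅, Finset.Subset.refl _, by simp, by simp⟩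
    obtain ⟨p, hpM, hpmax⟩ := M.exists_max_image w hne
    set P : V × V → Prop := fun q => q.1 ≠ p.1 ∧ q.1 ≠ p.2 ∧ q.2 ≠ p.1 ∧ q.2 ≠ p.2 with hP
    set M' : Finset (V × V) := M.filter P with hM'
    have hpM' : p ∉ M' := by simp [hM', hP]
    have hM'sub : M' ⊆ M := Finset.filter_subset _ _
    have hM'ssub : M' ⊂ M := Finset.ssubset_iff_of_subset hM'sub |>.2 ⟨p, hpM, hpM'⟩
    obtain ⟨N, hNsub, hNmatch, hNsum⟩ := ih M' hM'ssub
      (fun q hq => hw q (hM'sub hq))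
      (fun a ha b hb => hmatch a (hM'sub ha) b (hM'sub hb))
    have hpN : p ∉ N := fun h => hpM' (hNsub h)
    refine ⟨insert p N, ?_, ?_, ?_⟩
    · intro q hq
      rcases Finset.mem_insert.1 hq with rfl | hq
      · exact hpM
      · exact hM'sub (hNsub hq)
    · intro a ha b hb hab
      rcases Finset.mem_insert.1 ha with ha1 | ha2 <;>
        rcases Finset.mem_insert.1 hb with hb1 | hb2
      · exact absurd (ha1.trans hb1.symm) hab
      · subst ha1
        have hb' := Finset.mem_filter.1 (hNsub hb2)
        obtain ⟨h1, h2, h3, h4⟩ := hb'.2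
        exact ⟨h1.symm, h3.symm, h2.symm, h4.symm⟩
      · subst hb1
        have ha' := Finset.mem_filter.1 (hNsub ha2)
        obtain ⟨h1, h2, h3, h4⟩ := ha'.2
        exact ⟨h1, h2, h3, h4⟩
      · exact hNmatch a ha2 b hb2 hab
    · -- weight bound
      have hsplit : ∑ q ∈ M.filter P, w q + ∑ q ∈ M.filter (fun q => ¬ P q), w q
          = ∑ q ∈ M, w q := Finset.sum_filter_add_sum_filter_not M P w
      set R : Finset (V × V) := M.filter (fun q => ¬ P q) with hR
      -- R ⊆ {p} ∪ F1 ∪ F2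
      have hRsub : R ⊆ insert p ((M.filter (fun q => q.1 = p.2)) ∪ (M.filter (fun q => q.2 = p.1))) := by
        intro q hq
        have hq' := Finset.mem_filter.1 hq
        by_cases hqp : q = p
        · simp [hqp]
        · have hm := hmatch q hq'.1 p hpM hqp
          have : q.1 = p.2 ∨ q.2 = p.1 := by
            have := hq'.2
            simp only [hP, not_and_or, not_ne_iff] at this
            rcases this with h | h | h | h
            · exact absurd h hm.1
            · exact Or.inl h
            · exact Or.inr h
            · exact absurd h hm.2
          rcases this with h | h
          · exact Finset.mem_insert.2 (Or.inr (Finset.mem_union_left _ (Finset.mem_filter.2 ⟨hq'.1, h⟩)))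
          · exact Finset.mem_insert.2 (Or.inr (Finset.mem_union_right _ (Finset.mem_filter.2 ⟨hq'.1, h⟩)))
      have hF1 : (M.filter (fun q => q.1 = p.2)).card ≤ 1 := by
        refine Finset.card_le_one.2 (fun a ha b hb => ?_)
        have ha' := Finset.mem_filter.1 ha
        have hb' := Finset.mem_filter.1 hb
        by_contra hab
        exact (hmatch a ha'.1 b hb'.1 hab).1 (ha'.2.trans hb'.2.symm)
      have hF2 : (M.filter (fun q => q.2 = p.1)).card ≤ 1 := by
        refine Finset.card_le_one.2 (fun a ha b hb => ?_)
        have ha' := Finset.mem_filter.1 ha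
        have hb' := Finset.mem_filter.1 hb
        by_contra hab
        exact (hmatch a ha'.1 b hb'.1 hab).2 (ha'.2.trans hb'.2.symm)
      have hRcard : R.card ≤ 3 := by
        calc R.card ≤ (insert p ((M.filter (fun q => q.1 = p.2)) ∪ (M.filter (fun q => q.2 = p.1)))).card :=
              Finset.card_le_card hRsub
          _ ≤ ((M.filter (fun q => q.1 = p.2)) ∪ (M.filter (fun q => q.2 = p.1))).card + 1 :=
              Finset.card_insert_le _ _
          _ ≤ ((M.filter (fun q => q.1 = p.2)).card + (M.filter (fun q => q.2 = p.1)).card) + 1 := by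
              exact Nat.add_le_add_right (Finset.card_union_le _ _) 1
          _ ≤ 3 := by omega
      have hwp : 0 ≤ w p := hw p hpM
      have hRsum : ∑ q ∈ R, w q ≤ 3 * w p := by
        calc ∑ q ∈ R, w q ≤ R.card • w p :=
              Finset.sum_le_card_nsmul R w (w p) (fun q hq => hpmax q (Finset.mem_filter.1 hq).1)
          _ = (R.card : ℝ) * w p := by simp [nsmul_eq_mul]
          _ ≤ 3 * w p := by
              apply mul_le_mul_of_nonneg_right _ hwp
              exact_mod_cast hRcard
      have hins : ∑ q ∈ insert p N, w q = w p + ∑ q ∈ N, w q := Finset.sum_insert hpN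
      have : ∑ q ∈ M, w q ≤ 4 * ∑ q ∈ N, w q + 3 * w p := by
        rw [← hsplit]
        exact add_le_add hNsum hRsum
      rw [hins]
      nlinarith
/-- The maximum weight of a directed matching in an orientation of a weighted graph is at most
four times the maximum weight of an undirected matching.  Here `E` is the edge set of the
orientation (each undirected edge appears with exactly one of its two orientations), with
nonnegative weights `w`. -/
theorem directed_matching_le_four_mul_undirected {V : Type*} [Fintype V] [DecidableEq V]
    (E : Finset (V × V)) (w : V × V → ℝ)
    (hw : ∀ p ∈ E, 0 ≤ w p)
    (hirr : ∀ p ∈ E, p.1 ≠ p.2)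
    (horient : ∀ p ∈ E, (p.2, p.1) ∉ E) :
    sSup {x : ℝ | ∃ M ⊆ E,
        (∀ p ∈ M, ∀ q ∈ M, p ≠ q → p.1 ≠ q.1 ∧ p.2 ≠ q.2) ∧
        x = ∑ p ∈ M, w p}
      ≤ 4 * sSup {x : ℝ | ∃ M ⊆ E,
        (∀ p ∈ M, ∀ q ∈ M, p ≠ q → p.1 ≠ q.1 ∧ p.1 ≠ q.2 ∧ p.2 ≠ q.1 ∧ p.2 ≠ q.2) ∧
        x = ∑ p ∈ M, w p} := by
  set T : Set ℝ := {x : ℝ | ∃ M ⊆ E,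
      (∀ p ∈ M, ∀ q ∈ M, p ≠ q → p.1 ≠ q.1 ∧ p.1 ≠ q.2 ∧ p.2 ≠ q.1 ∧ p.2 ≠ q.2) ∧
      x = ∑ p ∈ M, w p} with hT
  have hTbdd : BddAbove T := by
    refine ⟨∑ p ∈ E, w p, fun y hy => ?_⟩
    obtain ⟨M, hME, _, rfl⟩ := hy
    exact Finset.sum_le_sum_of_subset_of_nonneg hME (fun p hp _ => hw p hp)
  have h0T : (0 : ℝ) ∈ T := ⟨∅, by simp, by simp, by simp⟩
  have hTnn : 0 ≤ sSup T := le_csSup hTbdd h0T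
  apply Real.sSup_le _ (by linarith)
  rintro x ⟨M, hME, hmatch, rfl⟩
  obtain ⟨N, hNM, hNmatch, hNsum⟩ :=
    directed_matching_extract w M (fun p hp => hw p (hME hp)) hmatch
  have hNT : ∑ p ∈ N, w p ∈ T := ⟨N, hNM.trans hME, hNmatch, rfl⟩
  have : ∑ p ∈ N, w p ≤ sSup T := le_csSup hTbdd hNT
  calc ∑ p ∈ M, w p ≤ 4 * ∑ p ∈ N, w p := hNsum
    _ ≤ 4 * sSup T := by linarith
end

section
/- Let T = (V,F) be a finite tree with positive edge weights u, let π_u be the induced stationary distribution of the random walk on (T,u). Then the spectral gap of the random walk satisfies Γ_u ≥ Φ̃*_u / diam(T), where Φ̃*_u is the minimum adjusted conductance over nontrivial vertex subsets. -/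
open Finset

/-- Dirichlet form of the random walk with symmetric edge weights `u`
(up to the common normalisation `1/u(V)`): `(1/2)·Σ_{x,y} u x y (f x − f y)²`. -/
noncomputable def dirichletForm {V : Type*} [Fintype V] (u : V → V → ℝ) (f : V → ℝ) : ℝ :=
  (∑ x, ∑ y, u x y * (f x - f y) ^ 2) / 2

/-- Variance of `f` under the stationary distribution `π_u(x) = u(x)/u(V)`
(up to the common normalisation `1/u(V)`): `Σ_x u(x)·(f x − π_u f)²`. -/
noncomputable def varForm {V : Type*} [Fintype V] (u : V → V → ℝ) (f : V → ℝ) : ℝ :=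
  ∑ x, (∑ y, u x y) * (f x - (∑ z, (∑ y, u z y) * f z) / (∑ a, ∑ b, u a b)) ^ 2

/-- The spectral gap of the reversible random walk with weights `u`, via the variational
(Rayleigh quotient) characterisation: `Γ_u = inf_{f nonconstant} E(f,f)/Var_π(f)`. -/
noncomputable def specGap {V : Type*} [Fintype V] (u : V → V → ℝ) : ℝ :=
  sInf {r : ℝ | ∃ f : V → ℝ, (∃ x y, f x ≠ f y) ∧ r = dirichletForm u f / varForm u f}

/-- Minimum adjusted conductance `Φ̃*_u`:  `Φ̃_u(S) = π_u(E(S,Sᶜ))/(π_u(S)π_u(Sᶜ))`,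
minimised over `S` with `0 < π_u(S) < 1`. -/
noncomputable def minAdjCond {V : Type*} [Fintype V] [DecidableEq V] (u : V → V → ℝ) : ℝ :=
  sInf {r : ℝ | ∃ S : Finset V,
    0 < (∑ x ∈ S, ∑ y, u x y) / (∑ a, ∑ b, u a b) ∧
    (∑ x ∈ S, ∑ y, u x y) / (∑ a, ∑ b, u a b) < 1 ∧
    r = ((∑ x ∈ S, ∑ y ∈ Sᶜ, u x y) / (∑ a, ∑ b, u a b)) /
      (((∑ x ∈ S, ∑ y, u x y) / (∑ a, ∑ b, u a b)) *
        ((∑ x ∈ Sᶜ, ∑ y, u x y) / (∑ a, ∑ b, u a b)))}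

section AuxLemmas
open SimpleGraph

lemma walk_telescope {V : Type*} {G : SimpleGraph V} (f : V → ℝ) :
    ∀ {x y : V} (p : G.Walk x y),
      (p.darts.map fun d => f d.fst - f d.snd).sum = f x - f y := by
  intro x y p
  induction p with
  | nil => simp
  | cons h q ih => simp [ih]

lemma path_dart_reach {V : Type*} {G : SimpleGraph V} :
    ∀ {x y : V} (p : G.Walk x y), p.IsPath → ∀ d ∈ p.darts,
      (G.deleteEdges {d.edge}).Reachable x d.fst ∧
      (G.deleteEdges {d.edge}).Reachable d.snd y := by
  intro x y p
  induction p with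
  | nil => simp
  | @cons x z y h q ih =>
    intro hp d hd
    have hq : q.IsPath := (SimpleGraph.Walk.cons_isPath_iff h q).mp hp |>.1
    have hxs : x ∉ q.support := ((SimpleGraph.Walk.cons_isPath_iff h q).mp hp).2
    rw [SimpleGraph.Walk.darts_cons, List.mem_cons] at hd
    rcases hd with hd | hd
    · subst hd
      constructor
      · exact Reachable.refl x
      · have hne : ∀ e ∈ q.edges, e ∉ ({SimpleGraph.Dart.edge ⟨(x, z), h⟩} : Set (Sym2 V)) := by
          intro e he hee
          simp only [Set.mem_singleton_iff] at hee
          subst hee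
          exact hxs (q.fst_mem_support_of_mem_edges he)
        exact ⟨q.toDeleteEdges _ hne⟩
    · obtain ⟨h1, h2⟩ := ih hq d hd
      refine ⟨?_, h2⟩
      have hedge : d.edge ∈ q.edges := by
        rw [SimpleGraph.Walk.edges]
        exact List.mem_map_of_mem hd
      have hxz : (G.deleteEdges {d.edge}).Adj x z := by
        rw [SimpleGraph.deleteEdges_adj]
        refine ⟨h, ?_⟩
        intro hc
        simp only [Set.mem_singleton_iff] at hc
        rw [← hc] at hedge
        exact hxs (q.fst_mem_support_of_mem_edges hedge)
      exact hxz.reachable.trans h1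

lemma reach_or_delete {V : Type*} {G : SimpleGraph V} (a b : V) :
    ∀ {x : V}, G.Reachable x a →
      (G.deleteEdges {s(a, b)}).Reachable x a ∨ (G.deleteEdges {s(a, b)}).Reachable x b := by
  intro x hr
  obtain ⟨w⟩ := hr
  induction w with
  | nil => exact Or.inl (Reachable.refl _)
  | @cons x z a h q ih =>
    by_cases he : s(x, z) = s(a, b)
    · rw [Sym2.eq_iff] at he
      rcases he with ⟨hxa, hzb⟩ | ⟨hxb, hza⟩
      · subst hxa; exact Or.inl (Reachable.refl _)
      · subst hxb; exact Or.inr (Reachable.refl _)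
    · have hxz : (G.deleteEdges {s(a, b)}).Adj x z := by
        rw [SimpleGraph.deleteEdges_adj]
        exact ⟨h, by simpa using he⟩
      rcases ih with h1 | h1
      · exact Or.inl (hxz.reachable.trans h1)
      · exact Or.inr (hxz.reachable.trans h1)

/-- The set of vertices on the `d.fst` side of the edge of the dart `d`. -/
noncomputable def dartSide {V : Type*} [Fintype V] (G : SimpleGraph V) (d : G.Dart) : Finset V :=
  @Finset.filter _ (fun v => (G.deleteEdges {d.edge}).Reachable v d.fst)
    (Classical.decPred _) Finset.univ

lemma mem_dartSide {V : Type*} [Fintype V] {G : SimpleGraph V} {d : G.Dart} {v : V} :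
    v ∈ dartSide G d ↔ (G.deleteEdges {d.edge}).Reachable v d.fst := by
  classical
  simp [dartSide]

lemma dartSide_fst {V : Type*} [Fintype V] {G : SimpleGraph V} (d : G.Dart) :
    d.fst ∈ dartSide G d := mem_dartSide.mpr (Reachable.refl _)

lemma dartSide_snd {V : Type*} [Fintype V] {G : SimpleGraph V} (hG : G.IsAcyclic) (d : G.Dart) :
    d.snd ∉ dartSide G d := by
  intro h
  have hbr := (SimpleGraph.isAcyclic_iff_forall_adj_isBridge.mp hG d.adj)
  rw [SimpleGraph.isBridge_iff] at hbr
  exact hbr ((mem_dartSide.mp h).symm)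

lemma path_bound {V : Type*} [Fintype V] [DecidableEq V] (T : SimpleGraph V) (hT : T.IsTree)
    (hediam : T.ediam ≠ ⊤) (f : V → ℝ) (x y : V) :
    ∃ s : Finset T.Dart, ((f x - f y)^2 ≤ (T.diam : ℝ) * ∑ d ∈ s, (f d.fst - f d.snd)^2) ∧
      ∀ d ∈ s, x ∈ dartSide T d ∧ y ∉ dartSide T d := by
  classical
  obtain ⟨q, hq⟩ := hT.isConnected.exists_walk_length_eq_dist x y
  set p := q.bypass with hpdef
  have hp : p.IsPath := q.bypass_isPath
  have hnd : p.darts.Nodup := SimpleGraph.Walk.darts_nodup_of_support_nodup hp.support_nodup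
  have hlen : (p.length : ℝ) ≤ (T.diam : ℝ) := by
    have h1 : p.length ≤ T.diam := le_trans q.length_bypass_le (hq ▸ dist_le_diam hediam)
    exact_mod_cast h1
  refine ⟨p.darts.toFinset, ?_, ?_⟩
  · have h1 : f x - f y = ∑ d ∈ p.darts.toFinset, (f d.fst - f d.snd) :=
      ((List.sum_toFinset _ hnd).trans (walk_telescope f p)).symm
    rw [h1]
    calc (∑ d ∈ p.darts.toFinset, (f d.fst - f d.snd))^2
        ≤ (p.darts.toFinset.card : ℝ) * ∑ d ∈ p.darts.toFinset, (f d.fst - f d.snd)^2 :=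
          sq_sum_le_card_mul_sum_sq
      _ ≤ (T.diam : ℝ) * ∑ d ∈ p.darts.toFinset, (f d.fst - f d.snd)^2 := by
          apply mul_le_mul_of_nonneg_right _ (Finset.sum_nonneg fun d _ => sq_nonneg _)
          rw [List.toFinset_card_of_nodup hnd, p.length_darts]
          exact hlen
  · intro d hd
    rw [List.mem_toFinset] at hd
    obtain ⟨r1, r2⟩ := path_dart_reach p hp d hd
    refine ⟨mem_dartSide.mpr r1, fun hy => ?_⟩
    have : (T.deleteEdges {d.edge}).Reachable d.snd d.fst :=
      r2.trans (mem_dartSide.mp hy)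
    have hbr := SimpleGraph.isAcyclic_iff_forall_adj_isBridge.mp hT.IsAcyclic d.adj
    rw [SimpleGraph.isBridge_iff] at hbr
    exact hbr this.symm

lemma cut_eq {V : Type*} [Fintype V] [DecidableEq V]
    (T : SimpleGraph V) (hT : T.IsTree) (u : V → V → ℝ)
    (hsupp : ∀ x y, 0 < u x y ↔ T.Adj x y) (hnn : ∀ x y, 0 ≤ u x y) (d : T.Dart) :
    (∑ x ∈ dartSide T d, ∑ y ∈ (dartSide T d)ᶜ, u x y) = u d.fst d.snd := by
  classical
  rw [← Finset.sum_product']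
  apply Finset.sum_eq_single_of_mem (d.fst, d.snd)
    (Finset.mem_product.mpr ⟨dartSide_fst d, Finset.mem_compl.mpr (dartSide_snd hT.IsAcyclic d)⟩)
  rintro ⟨x, y⟩ hxy hne
  by_contra h0
  have hu : 0 < u x y := lt_of_le_of_ne (hnn x y) (Ne.symm h0)
  have hadj : T.Adj x y := (hsupp x y).mp hu
  rw [Finset.mem_product] at hxy
  obtain ⟨hxS, hyS⟩ := hxy
  rw [Finset.mem_compl] at hyS
  have hxb : x ≠ d.snd := by
    rintro rfl
    exact dartSide_snd hT.IsAcyclic d hxS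
  have hexy : s(x, y) ≠ d.edge := by
    intro h
    rw [show d.edge = s(d.fst, d.snd) from rfl, Sym2.eq_iff] at h
    rcases h with ⟨rfl, rfl⟩ | ⟨rfl, rfl⟩
    · exact hne rfl
    · exact hxb rfl
  have hadj' : (T.deleteEdges {d.edge}).Adj x y := by
    rw [SimpleGraph.deleteEdges_adj]
    refine ⟨hadj, fun hc => hexy ?_⟩
    simpa using hc
  exact hyS (mem_dartSide.mpr (hadj'.symm.reachable.trans (mem_dartSide.mp hxS)))

lemma cut_bound {V : Type*} [Fintype V] [DecidableEq V]
    (T : SimpleGraph V) (hT : T.IsTree) (u : V → V → ℝ)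
    (hsupp : ∀ x y, 0 < u x y ↔ T.Adj x y) (hnn : ∀ x y, 0 ≤ u x y)
    (hwpos : ∀ x, 0 < ∑ y, u x y) (d : T.Dart) :
    minAdjCond u * ((∑ x ∈ dartSide T d, ∑ y, u x y) * (∑ x ∈ (dartSide T d)ᶜ, ∑ y, u x y))
      ≤ (∑ a, ∑ b, u a b) * u d.fst d.snd := by
  classical
  set S := dartSide T d with hSdef
  have hwnn : ∀ x ∈ (Finset.univ : Finset V), 0 ≤ ∑ y, u x y := fun x _ => (hwpos x).le
  have hS : 0 < ∑ x ∈ S, ∑ y, u x y :=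
    Finset.sum_pos' (fun x _ => (hwpos x).le) ⟨d.fst, dartSide_fst d, hwpos d.fst⟩
  have hSc : 0 < ∑ x ∈ Sᶜ, ∑ y, u x y :=
    Finset.sum_pos' (fun x _ => (hwpos x).le)
      ⟨d.snd, Finset.mem_compl.mpr (dartSide_snd hT.IsAcyclic d), hwpos d.snd⟩
  have hWsum : (∑ x ∈ S, ∑ y, u x y) + (∑ x ∈ Sᶜ, ∑ y, u x y) = ∑ a, ∑ b, u a b :=
    Finset.sum_add_sum_compl S _
  have hW : 0 < ∑ a, ∑ b, u a b := by linarith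
  set W := ∑ a, ∑ b, u a b
  set A := ∑ x ∈ S, ∑ y, u x y
  set B := ∑ x ∈ Sᶜ, ∑ y, u x y
  have hmem : ((u d.fst d.snd) / W) / ((A / W) * (B / W)) ∈
      {r : ℝ | ∃ S : Finset V,
        0 < (∑ x ∈ S, ∑ y, u x y) / (∑ a, ∑ b, u a b) ∧
        (∑ x ∈ S, ∑ y, u x y) / (∑ a, ∑ b, u a b) < 1 ∧
        r = ((∑ x ∈ S, ∑ y ∈ Sᶜ, u x y) / (∑ a, ∑ b, u a b)) /
          (((∑ x ∈ S, ∑ y, u x y) / (∑ a, ∑ b, u a b)) *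
            ((∑ x ∈ Sᶜ, ∑ y, u x y) / (∑ a, ∑ b, u a b)))} := by
    refine ⟨S, div_pos hS hW, ?_, ?_⟩
    · rw [div_lt_one hW]; linarith
    · rw [cut_eq T hT u hsupp hnn d]
  have hbdd : BddBelow {r : ℝ | ∃ S : Finset V,
        0 < (∑ x ∈ S, ∑ y, u x y) / (∑ a, ∑ b, u a b) ∧
        (∑ x ∈ S, ∑ y, u x y) / (∑ a, ∑ b, u a b) < 1 ∧
        r = ((∑ x ∈ S, ∑ y ∈ Sᶜ, u x y) / (∑ a, ∑ b, u a b)) /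
          (((∑ x ∈ S, ∑ y, u x y) / (∑ a, ∑ b, u a b)) *
            ((∑ x ∈ Sᶜ, ∑ y, u x y) / (∑ a, ∑ b, u a b)))} := by
    refine ⟨0, ?_⟩
    rintro r ⟨S', h1, h2, rfl⟩
    have hc : 0 ≤ ∑ x ∈ S', ∑ y ∈ S'ᶜ, u x y :=
      Finset.sum_nonneg fun x _ => Finset.sum_nonneg fun y _ => hnn x y
    have h3 : 0 ≤ (∑ x ∈ S'ᶜ, ∑ y, u x y) / W :=
      div_nonneg (Finset.sum_nonneg fun x _ => (hwpos x).le) hW.le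
    exact div_nonneg (div_nonneg hc hW.le) (mul_nonneg h1.le h3)
  have hle : minAdjCond u ≤ ((u d.fst d.snd) / W) / ((A / W) * (B / W)) :=
    csInf_le hbdd hmem
  have heq : ((u d.fst d.snd) / W) / ((A / W) * (B / W)) = (W * u d.fst d.snd) / (A * B) := by
    field_simp
  rw [heq] at hle
  calc minAdjCond u * (A * B) ≤ ((W * u d.fst d.snd) / (A * B)) * (A * B) :=
        mul_le_mul_of_nonneg_right hle (mul_pos hS hSc).le
    _ = W * u d.fst d.snd := div_mul_cancel₀ _ (mul_pos hS hSc).ne'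

lemma var_identity {V : Type*} [Fintype V] (w : V → ℝ) (f : V → ℝ) (hW : (∑ x, w x) ≠ 0) :
    2 * (∑ x, w x) * (∑ x, w x * (f x - (∑ z, w z * f z) / (∑ x, w x)) ^ 2)
      = ∑ x, ∑ y, w x * w y * (f x - f y) ^ 2 := by
  have key : ∀ c : ℝ, ∑ x, w x * (f x - c)^2
      = (∑ x, w x * f x^2) - (∑ x, w x*f x)*(2*c) + (∑ x, w x)*c^2 := by
    intro c
    have e : ∀ x, w x * (f x - c)^2 = w x * f x^2 - (w x * f x)*(2*c) + w x * c^2 :=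
      fun x => by ring
    simp only [e]
    rw [Finset.sum_add_distrib, Finset.sum_sub_distrib, ← Finset.sum_mul, ← Finset.sum_mul]
  have pair : ∑ x, ∑ y, w x * w y * (f x - f y)^2
      = 2*(∑ x, w x)*(∑ x, w x * f x^2) - 2*((∑ x, w x*f x)*(∑ x, w x*f x)) := by
    have e : ∀ x, ∑ y, w x * w y * (f x - f y)^2
        = (w x * f x^2) * (∑ y, w y) - (w x * f x) * (2 * ∑ y, w y * f y)
          + w x * (∑ y, w y * f y^2) := by
      intro x
      have e2 : ∀ y, w x * w y * (f x - f y)^2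
          = (w x * f x^2) * w y - (w x * f x) * (2*(w y * f y)) + w x * (w y * f y^2) :=
        fun y => by ring
      simp only [e2]
      rw [Finset.sum_add_distrib, Finset.sum_sub_distrib, ← Finset.mul_sum, ← Finset.mul_sum,
        ← Finset.mul_sum, ← Finset.mul_sum]
    simp only [e]
    rw [Finset.sum_add_distrib, Finset.sum_sub_distrib, ← Finset.sum_mul, ← Finset.sum_mul,
      ← Finset.sum_mul]
    ring
  rw [key, pair]
  field_simp
  ring

lemma ite_double_sum {V : Type*} [Fintype V] [DecidableEq V] (A B : Finset V)
    (w1 w2 : V → ℝ) (c : ℝ) :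
    ∑ x, ∑ y, (if x ∈ A ∧ y ∈ B then w1 x * (w2 y * c) else 0)
      = (∑ x ∈ A, w1 x) * (∑ y ∈ B, w2 y) * c := by
  have e : ∀ x, ∑ y, (if x ∈ A ∧ y ∈ B then w1 x * (w2 y * c) else 0)
      = (if x ∈ A then w1 x * ((∑ y ∈ B, w2 y) * c) else 0) := by
    intro x
    by_cases hx : x ∈ A
    · simp only [hx, true_and, if_pos]
      rw [Finset.sum_ite_mem, Finset.univ_inter]
      simp only [← Finset.mul_sum, ← Finset.sum_mul]
    · simp [hx]
  rw [Finset.sum_congr rfl fun x _ => e x, Finset.sum_ite_mem, Finset.univ_inter]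
  simp only [← Finset.sum_mul]
  ring

end AuxLemmas

/-- Canonical-paths bound for trees: the spectral gap of the random walk on a weighted tree is
at least the minimum adjusted conductance divided by the diameter of the tree. -/
theorem tree_specGap_ge {V : Type*} [Fintype V] [DecidableEq V]
    (T : SimpleGraph V) (hT : T.IsTree) (u : V → V → ℝ)
    (hsym : ∀ x y, u x y = u y x)
    (hsupp : ∀ x y, 0 < u x y ↔ T.Adj x y) (hnn : ∀ x y, 0 ≤ u x y) :
    minAdjCond u / (T.diam : ℝ) ≤ specGap u := by
  classical
  by_cases hne : {r : ℝ | ∃ f : V → ℝ, (∃ x y, f x ≠ f y) ∧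
      r = dirichletForm u f / varForm u f}.Nonempty
  swap
  · -- degenerate case: no nonconstant function, hence also no admissible set `S`
    rw [specGap, Set.not_nonempty_iff_eq_empty.mp hne, Real.sInf_empty]
    have hempty : {r : ℝ | ∃ S : Finset V,
        0 < (∑ x ∈ S, ∑ y, u x y) / (∑ a, ∑ b, u a b) ∧
        (∑ x ∈ S, ∑ y, u x y) / (∑ a, ∑ b, u a b) < 1 ∧
        r = ((∑ x ∈ S, ∑ y ∈ Sᶜ, u x y) / (∑ a, ∑ b, u a b)) /
          (((∑ x ∈ S, ∑ y, u x y) / (∑ a, ∑ b, u a b)) *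
            ((∑ x ∈ Sᶜ, ∑ y, u x y) / (∑ a, ∑ b, u a b)))} = ∅ := by
      rw [Set.eq_empty_iff_forall_notMem]
      rintro r ⟨S, h1, h2, -⟩
      have hS0 : S.Nonempty := by
        by_contra h
        rw [Finset.not_nonempty_iff_eq_empty] at h
        rw [h] at h1
        simp at h1
      have hSc0 : Sᶜ.Nonempty := by
        by_contra h
        rw [Finset.not_nonempty_iff_eq_empty, Finset.compl_eq_empty_iff] at h
        by_cases hw : (∑ a, ∑ b, u a b) = 0
        · rw [hw, div_zero] at h1
          exact lt_irrefl _ h1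
        · rw [h, show (∑ x ∈ (Finset.univ : Finset V), ∑ y, u x y) = ∑ a, ∑ b, u a b from rfl,
            div_self hw] at h2
          exact lt_irrefl _ h2
      obtain ⟨x₀, hx₀⟩ := hS0
      obtain ⟨y₀, hy₀⟩ := hSc0
      exact hne ⟨_, fun v => if v ∈ S then (1 : ℝ) else 0,
        ⟨x₀, y₀, by simp [hx₀, Finset.mem_compl.mp hy₀]⟩, rfl⟩
    rw [minAdjCond, hempty, Real.sInf_empty, zero_div]
  · rw [specGap]
    apply le_csInf hne
    rintro r ⟨f, ⟨x₀, y₀, hf⟩, rfl⟩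
    have hx0y0 : x₀ ≠ y₀ := fun h => hf (by rw [h])
    have : Nontrivial V := ⟨x₀, y₀, hx0y0⟩
    have hconn : T.Connected := hT.isConnected
    have hadjex : ∀ x : V, ∃ z, T.Adj x z := by
      intro x
      obtain ⟨y, hy⟩ := exists_ne x
      obtain ⟨p⟩ := hconn x y
      cases p with
      | nil => exact absurd rfl hy.symm
      | cons h q => exact ⟨_, h⟩
    have hwpos : ∀ x : V, 0 < ∑ y, u x y := by
      intro x
      obtain ⟨z, hz⟩ := hadjex x
      exact Finset.sum_pos' (fun y _ => hnn x y) ⟨z, Finset.mem_univ z, (hsupp x z).mpr hz⟩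
    have hW : 0 < ∑ a, ∑ b, u a b :=
      Finset.sum_pos (fun x _ => hwpos x) Finset.univ_nonempty
    have hediam : T.ediam ≠ ⊤ := by
      obtain ⟨a, b, hab⟩ := SimpleGraph.exists_edist_eq_ediam_of_finite (G := T)
      rw [← hab]
      exact SimpleGraph.edist_ne_top_iff_reachable.mpr (hconn a b)
    have hdiam : 0 < (T.diam : ℝ) := by
      have hd0 : T.diam ≠ 0 := by
        rw [Ne, SimpleGraph.diam_eq_zero]
        push_neg
        exact ⟨hediam, ‹Nontrivial V›⟩
      exact_mod_cast Nat.pos_of_ne_zero hd0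
    have hVar : 0 < varForm u f := by
      rw [varForm]
      have key : f x₀ ≠ (∑ z, (∑ y, u z y) * f z) / (∑ a, ∑ b, u a b) ∨
          f y₀ ≠ (∑ z, (∑ y, u z y) * f z) / (∑ a, ∑ b, u a b) := by
        by_contra h
        push_neg at h
        exact hf (h.1.trans h.2.symm)
      apply Finset.sum_pos' (fun x _ => mul_nonneg (hwpos x).le (sq_nonneg _))
      rcases key with h | h
      · exact ⟨x₀, Finset.mem_univ _, mul_pos (hwpos x₀)
          (lt_of_le_of_ne (sq_nonneg _) (Ne.symm (pow_ne_zero 2 (sub_ne_zero.mpr h))))⟩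
      · exact ⟨y₀, Finset.mem_univ _, mul_pos (hwpos y₀)
          (lt_of_le_of_ne (sq_nonneg _) (Ne.symm (pow_ne_zero 2 (sub_ne_zero.mpr h))))⟩
    letI : DecidableRel T.Adj := fun a b => Classical.dec _
    -- nonnegativity of the minimum adjusted conductance
    have hM0 : 0 ≤ minAdjCond u := by
      apply Real.sInf_nonneg
      rintro r ⟨S', h1, h2, rfl⟩
      have hc : 0 ≤ ∑ x ∈ S', ∑ y ∈ S'ᶜ, u x y :=
        Finset.sum_nonneg fun x _ => Finset.sum_nonneg fun y _ => hnn x y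
      have h3 : 0 ≤ (∑ x ∈ S'ᶜ, ∑ y, u x y) / (∑ a, ∑ b, u a b) :=
        div_nonneg (Finset.sum_nonneg fun x _ => (hwpos x).le) hW.le
      exact div_nonneg (div_nonneg hc hW.le) (mul_nonneg h1.le h3)
    -- choose canonical paths
    choose s hs1 hs2 using fun x y => path_bound T hT hediam f x y
    -- comparison inequality (I): pair variance against weighted cuts
    have hI : ∑ x, ∑ y, (∑ y', u x y') * (∑ y', u y y') * (f x - f y)^2
        ≤ (T.diam : ℝ) * ∑ d : T.Dart, (f d.fst - f d.snd)^2 *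
            ((∑ x ∈ dartSide T d, ∑ y, u x y) * (∑ x ∈ (dartSide T d)ᶜ, ∑ y, u x y)) := by
      have step1 : ∑ x, ∑ y, (∑ y', u x y') * (∑ y', u y y') * (f x - f y)^2
          ≤ ∑ x, ∑ y, ∑ d : T.Dart,
              (if x ∈ dartSide T d ∧ y ∈ (dartSide T d)ᶜ then
                (∑ y', u x y') * ((∑ y', u y y') * ((T.diam : ℝ) * (f d.fst - f d.snd)^2))
              else 0) := by
        apply Finset.sum_le_sum
        intro x _
        apply Finset.sum_le_sum
        intro y _
        calc (∑ y', u x y') * (∑ y', u y y') * (f x - f y)^2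
            ≤ (∑ y', u x y') * (∑ y', u y y') *
                ((T.diam : ℝ) * ∑ d ∈ s x y, (f d.fst - f d.snd)^2) :=
              mul_le_mul_of_nonneg_left (hs1 x y)
                (mul_nonneg (hwpos x).le (hwpos y).le)
          _ = ∑ d ∈ s x y,
                (∑ y', u x y') * ((∑ y', u y y') * ((T.diam : ℝ) * (f d.fst - f d.snd)^2)) := by
              have e1 : (T.diam : ℝ) * ∑ d ∈ s x y, (f d.fst - f d.snd)^2
                  = ∑ d ∈ s x y, (T.diam : ℝ) * (f d.fst - f d.snd)^2 :=
                Finset.mul_sum _ _ _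
              have e2 : (∑ y', u x y') * (∑ y', u y y') *
                    (∑ d ∈ s x y, (T.diam : ℝ) * (f d.fst - f d.snd)^2)
                  = ∑ d ∈ s x y, (∑ y', u x y') * (∑ y', u y y') *
                      ((T.diam : ℝ) * (f d.fst - f d.snd)^2) :=
                Finset.mul_sum _ _ _
              rw [e1, e2]
              exact Finset.sum_congr rfl fun d _ => by ring
          _ ≤ ∑ d : T.Dart,
                (if x ∈ dartSide T d ∧ y ∈ (dartSide T d)ᶜ then
                  (∑ y', u x y') * ((∑ y', u y y') * ((T.diam : ℝ) * (f d.fst - f d.snd)^2))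
                else 0) := by
              rw [← Finset.sum_filter]
              apply Finset.sum_le_sum_of_subset_of_nonneg
              · intro d hd
                rw [Finset.mem_filter]
                exact ⟨Finset.mem_univ d, (hs2 x y d hd).1,
                  Finset.mem_compl.mpr (hs2 x y d hd).2⟩
              · intro d _ _
                exact mul_nonneg (hwpos x).le (mul_nonneg (hwpos y).le
                  (mul_nonneg hdiam.le (sq_nonneg _)))
      have step2 : ∑ x, ∑ y, ∑ d : T.Dart,
            (if x ∈ dartSide T d ∧ y ∈ (dartSide T d)ᶜ then
              (∑ y', u x y') * ((∑ y', u y y') * ((T.diam : ℝ) * (f d.fst - f d.snd)^2))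
            else 0)
          = (T.diam : ℝ) * ∑ d : T.Dart, (f d.fst - f d.snd)^2 *
              ((∑ x ∈ dartSide T d, ∑ y, u x y) * (∑ x ∈ (dartSide T d)ᶜ, ∑ y, u x y)) := by
        rw [Finset.sum_congr rfl fun x (_ : x ∈ Finset.univ) => Finset.sum_comm, Finset.sum_comm]
        rw [Finset.sum_congr rfl fun d (_ : d ∈ Finset.univ) =>
          ite_double_sum (dartSide T d) (dartSide T d)ᶜ (fun x => ∑ y', u x y')
            (fun y => ∑ y', u y y') ((T.diam : ℝ) * (f d.fst - f d.snd)^2)]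
        rw [Finset.mul_sum]
        exact Finset.sum_congr rfl fun d _ => by ring
      exact step1.trans_eq step2
    -- comparison inequality (II): weighted cuts against the Dirichlet form
    have hII : minAdjCond u * ∑ d : T.Dart, (f d.fst - f d.snd)^2 *
          ((∑ x ∈ dartSide T d, ∑ y, u x y) * (∑ x ∈ (dartSide T d)ᶜ, ∑ y, u x y))
        ≤ (∑ a, ∑ b, u a b) * ∑ d : T.Dart, u d.fst d.snd * (f d.fst - f d.snd)^2 := by
      rw [Finset.mul_sum, Finset.mul_sum]
      apply Finset.sum_le_sum
      intro d _
      have hc := cut_bound T hT u hsupp hnn hwpos d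
      calc minAdjCond u * ((f d.fst - f d.snd)^2 *
              ((∑ x ∈ dartSide T d, ∑ y, u x y) * (∑ x ∈ (dartSide T d)ᶜ, ∑ y, u x y)))
          = (minAdjCond u *
              ((∑ x ∈ dartSide T d, ∑ y, u x y) * (∑ x ∈ (dartSide T d)ᶜ, ∑ y, u x y))) *
              (f d.fst - f d.snd)^2 := by ring
        _ ≤ ((∑ a, ∑ b, u a b) * u d.fst d.snd) * (f d.fst - f d.snd)^2 :=
            mul_le_mul_of_nonneg_right hc (sq_nonneg _)
        _ = (∑ a, ∑ b, u a b) * (u d.fst d.snd * (f d.fst - f d.snd)^2) := by ring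
    -- the Dirichlet form as a sum over darts
    have hdir : ∑ d : T.Dart, u d.fst d.snd * (f d.fst - f d.snd)^2
        = 2 * dirichletForm u f := by
      have h1 : ∑ d : T.Dart, u d.fst d.snd * (f d.fst - f d.snd)^2
          = ∑ p ∈ Finset.univ.image (SimpleGraph.Dart.toProd (G := T)),
              u p.1 p.2 * (f p.1 - f p.2)^2 := by
        rw [Finset.sum_image (fun a _ b _ h => SimpleGraph.Dart.toProd_injective h)]
      have h2 : ∑ p ∈ Finset.univ.image (SimpleGraph.Dart.toProd (G := T)),
            u p.1 p.2 * (f p.1 - f p.2)^2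
          = ∑ p : V × V, u p.1 p.2 * (f p.1 - f p.2)^2 := by
        apply Finset.sum_subset (Finset.subset_univ _)
        rintro ⟨x, y⟩ - hp
        have hna : ¬ T.Adj x y := fun h =>
          hp (Finset.mem_image.mpr ⟨⟨(x, y), h⟩, Finset.mem_univ _, rfl⟩)
        have hz : u x y = 0 :=
          le_antisymm (not_lt.mp fun h => hna ((hsupp x y).mp h)) (hnn x y)
        simp [hz]
      rw [h1, h2, Fintype.sum_prod_type, dirichletForm]
      ring
    -- the variance identity
    have hvar2 : 2 * (∑ a, ∑ b, u a b) * varForm u f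
        = ∑ x, ∑ y, (∑ y', u x y') * (∑ y', u y y') * (f x - f y)^2 :=
      var_identity (fun x => ∑ y, u x y) f hW.ne'
    -- assemble everything
    have main : minAdjCond u * varForm u f ≤ (T.diam : ℝ) * dirichletForm u f := by
      have c1 : minAdjCond u * (2 * (∑ a, ∑ b, u a b) * varForm u f)
          ≤ (T.diam : ℝ) * ((∑ a, ∑ b, u a b) * (2 * dirichletForm u f)) := by
        calc minAdjCond u * (2 * (∑ a, ∑ b, u a b) * varForm u f)
            = minAdjCond u * ∑ x, ∑ y, (∑ y', u x y') * (∑ y', u y y') * (f x - f y)^2 := by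
              rw [hvar2]
          _ ≤ minAdjCond u * ((T.diam : ℝ) * ∑ d : T.Dart, (f d.fst - f d.snd)^2 *
                ((∑ x ∈ dartSide T d, ∑ y, u x y) * (∑ x ∈ (dartSide T d)ᶜ, ∑ y, u x y))) :=
              mul_le_mul_of_nonneg_left hI hM0
          _ = (T.diam : ℝ) * (minAdjCond u * ∑ d : T.Dart, (f d.fst - f d.snd)^2 *
                ((∑ x ∈ dartSide T d, ∑ y, u x y) * (∑ x ∈ (dartSide T d)ᶜ, ∑ y, u x y))) := by
              ring
          _ ≤ (T.diam : ℝ) * ((∑ a, ∑ b, u a b) *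
                ∑ d : T.Dart, u d.fst d.snd * (f d.fst - f d.snd)^2) :=
              mul_le_mul_of_nonneg_left hII hdiam.le
          _ = (T.diam : ℝ) * ((∑ a, ∑ b, u a b) * (2 * dirichletForm u f)) := by
              rw [hdir]
      have e1 : minAdjCond u * (2 * (∑ a, ∑ b, u a b) * varForm u f)
          = (2 * (∑ a, ∑ b, u a b)) * (minAdjCond u * varForm u f) := by ring
      have e2 : (T.diam : ℝ) * ((∑ a, ∑ b, u a b) * (2 * dirichletForm u f))
          = (2 * (∑ a, ∑ b, u a b)) * ((T.diam : ℝ) * dirichletForm u f) := by ring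
      rw [e1, e2] at c1
      exact le_of_mul_le_mul_left c1 (by positivity)
    rw [div_le_div_iff₀ hdiam hVar]
    linarith [main]
end

section
/- Canonical paths bound: Let G = (V,E) be a connected finite graph with positive edge weighting u, and for each pair x,y ∈ V fix a path Γ_{x,y} in G from x to y. Then the spectral gap of the reversible random walk on (G,u) satisfies Γ_u ≥ min over edges e of [ (u(e)/u(V)) / Σ_{x,y: e ∈ Γ_{x,y}} π_u(x)π_u(y)|Γ_{x,y}| ]. -/
open Finset
open scoped Classical

/-- Stationary distribution `π_u(x) = u(x)/u(V)`. -/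
noncomputable def piPt {V : Type*} [Fintype V] (u : V → V → ℝ) (x : V) : ℝ :=
  (∑ y, u x y) / (∑ a, ∑ b, u a b)


/-- squared difference, as a function on `Sym2`. -/
noncomputable def gsq {V : Type*} (f : V → ℝ) : Sym2 V → ℝ :=
  Sym2.lift ⟨fun a b => (f a - f b) ^ 2, fun a b => by ring⟩

lemma gsq_mk {V : Type*} (f : V → ℝ) (a b : V) : gsq f s(a, b) = (f a - f b) ^ 2 := rfl

lemma gsq_nonneg {V : Type*} (f : V → ℝ) (e : Sym2 V) : 0 ≤ gsq f e := by
  induction e using Sym2.ind with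
  | _ a b => exact sq_nonneg _

lemma edgesum_nonneg {V : Type*} (f : V → ℝ) (l : List (Sym2 V)) :
    0 ≤ (l.map (gsq f)).sum := by
  apply List.sum_nonneg
  intro r hr
  obtain ⟨e, -, rfl⟩ := List.mem_map.mp hr
  exact gsq_nonneg f e

lemma walk_cs {V : Type*} {G : SimpleGraph V} (f : V → ℝ) {x y : V} (w : G.Walk x y) :
    (f x - f y) ^ 2 ≤ (w.length : ℝ) * (w.edges.map (gsq f)).sum := by
  induction w with
  | nil => simp
  | @cons x z y h p ih =>
    rw [SimpleGraph.Walk.edges_cons, SimpleGraph.Walk.length_cons, List.map_cons, List.sum_cons,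
      gsq_mk]
    push_cast
    have hT : 0 ≤ (p.edges.map (gsq f)).sum := edgesum_nonneg f _
    have hL : (0:ℝ) ≤ (p.length : ℝ) := by positivity
    set A := f x - f z
    set B := f z - f y
    set L : ℝ := (p.length : ℝ)
    set T := (p.edges.map (gsq f)).sum
    have hfx : f x - f y = A + B := by ring
    rw [hfx]
    rcases eq_or_lt_of_le hL with hL0 | hL0
    · have hB : B ^ 2 = 0 := le_antisymm (by rw [← hL0] at ih; linarith) (sq_nonneg B)
      have hB0 : B = 0 := by
        have := sq_eq_zero_iff.mp hB
        exact this
      rw [hB0, ← hL0]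
      nlinarith [hT]
    · have h2 : (L + 1) * B ^ 2 ≤ (L + 1) * (L * T) :=
        mul_le_mul_of_nonneg_left ih (by linarith)
      nlinarith [sq_nonneg (L * A - B), h2, hL0]

lemma sum_if_eq {V : Type*} [Fintype V] [DecidableEq V] (f : V → ℝ) (p q : V) (hpq : p ≠ q) :
    ∑ a : V, ∑ b : V, (if s(a, b) = s(p, q) then (f a - f b) ^ 2 else 0)
      = 2 * (f p - f q) ^ 2 := by
  have key : ∀ a b : V, (if s(a, b) = s(p, q) then (f a - f b) ^ 2 else 0)
      = (if a = p then (if b = q then (f a - f b) ^ 2 else 0) else 0)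
        + (if a = q then (if b = p then (f a - f b) ^ 2 else 0) else 0) := by
    intro a b
    simp only [Sym2.eq_iff]
    by_cases h1 : a = p <;> by_cases h2 : a = q <;> by_cases h3 : b = p <;> by_cases h4 : b = q <;>
      simp_all
  simp only [key, Finset.sum_add_distrib]
  have h1 : ∑ a : V, ∑ b : V, (if a = p then (if b = q then (f a - f b) ^ 2 else 0) else 0)
      = (f p - f q) ^ 2 := by
    rw [Finset.sum_eq_single p]
    · simp
    · intro a _ ha; simp [ha]
    · intro h; exact absurd (Finset.mem_univ p) h
  have h2 : ∑ a : V, ∑ b : V, (if a = q then (if b = p then (f a - f b) ^ 2 else 0) else 0)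
      = (f q - f p) ^ 2 := by
    rw [Finset.sum_eq_single q]
    · simp
    · intro a _ ha; simp [ha]
    · intro h; exact absurd (Finset.mem_univ q) h
  rw [h1, h2]
  ring

lemma sum_if_mem {V : Type*} [Fintype V] [DecidableEq V] (f : V → ℝ) (l : List (Sym2 V))
    (hnd : l.Nodup) (hdiag : ∀ e ∈ l, ¬ e.IsDiag) :
    ∑ a : V, ∑ b : V, (if s(a, b) ∈ l then (f a - f b) ^ 2 else 0)
      = 2 * (l.map (gsq f)).sum := by
  induction l with
  | nil => simp
  | cons e l ih =>
    have he : e ∉ l := (List.nodup_cons.mp hnd).1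
    have hnd' : l.Nodup := (List.nodup_cons.mp hnd).2
    have hd : ¬ e.IsDiag := hdiag e (List.mem_cons_self)
    have key : ∀ a b : V, (if s(a, b) ∈ e :: l then (f a - f b) ^ 2 else 0)
        = (if s(a, b) = e then (f a - f b) ^ 2 else 0)
          + (if s(a, b) ∈ l then (f a - f b) ^ 2 else 0) := by
      intro a b
      by_cases h1 : s(a, b) = e
      · rw [if_pos (by rw [h1]; exact List.mem_cons_self), if_pos h1,
          if_neg (by rw [h1]; exact he), add_zero]
      · by_cases h2 : s(a, b) ∈ l <;> simp [List.mem_cons, h1, h2]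
    simp only [key, Finset.sum_add_distrib]
    rw [ih hnd' (fun e' he' => hdiag e' (List.mem_cons_of_mem _ he'))]
    induction e using Sym2.ind with
    | _ p q =>
      have hpq : p ≠ q := by simpa using hd
      rw [sum_if_eq f p q hpq]
      simp [gsq_mk]
      ring

lemma sum_swap4 {V : Type*} [Fintype V] (F : V → V → V → V → ℝ) :
    ∑ x : V, ∑ y : V, ∑ a : V, ∑ b : V, F x y a b
      = ∑ a : V, ∑ b : V, ∑ x : V, ∑ y : V, F x y a b := by
  have h1 : ∀ g : V → V → ℝ, ∑ p : V, ∑ q : V, g p q = ∑ q : V, ∑ p : V, g p q :=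
    fun g => Finset.sum_comm
  calc ∑ x : V, ∑ y : V, ∑ a : V, ∑ b : V, F x y a b
      = ∑ x : V, ∑ a : V, ∑ y : V, ∑ b : V, F x y a b :=
        Finset.sum_congr rfl fun x _ => h1 _
    _ = ∑ a : V, ∑ x : V, ∑ y : V, ∑ b : V, F x y a b := h1 _
    _ = ∑ a : V, ∑ x : V, ∑ b : V, ∑ y : V, F x y a b :=
        Finset.sum_congr rfl fun a _ => Finset.sum_congr rfl fun x _ => h1 _
    _ = ∑ a : V, ∑ b : V, ∑ x : V, ∑ y : V, F x y a b :=
        Finset.sum_congr rfl fun a _ => h1 _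

lemma sum_var_identity {V : Type*} [Fintype V] (A : V → ℝ) (f : V → ℝ)
    (hW : (0:ℝ) < ∑ x : V, A x) :
    ∑ x : V, A x * (f x - (∑ z : V, A z * f z) / (∑ x : V, A x)) ^ 2
      = (∑ x : V, ∑ y : V, A x * A y * (f x - f y) ^ 2) / (2 * ∑ x : V, A x) := by
  set W := ∑ x : V, A x with hWdef
  set S2 := ∑ x : V, A x * f x with hS2
  set S3 := ∑ x : V, A x * f x ^ 2 with hS3
  have hWne : W ≠ 0 := ne_of_gt hW
  have h1 : ∑ x : V, A x * (f x - S2 / W) ^ 2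
      = S3 - 2 * (S2 / W) * S2 + (S2 / W) ^ 2 * W := by
    have e : ∀ x : V, A x * (f x - S2 / W) ^ 2
        = A x * f x ^ 2 - 2 * (S2 / W) * (A x * f x) + (S2 / W) ^ 2 * A x := fun x => by ring
    rw [Finset.sum_congr rfl fun x _ => e x, Finset.sum_add_distrib, Finset.sum_sub_distrib,
      ← Finset.mul_sum, ← Finset.mul_sum, ← hS2, ← hS3, ← hWdef]
  have h2 : ∑ x : V, ∑ y : V, A x * A y * (f x - f y) ^ 2 = 2 * W * S3 - 2 * S2 ^ 2 := by
    have inner : ∀ x : V, ∑ y : V, A x * A y * (f x - f y) ^ 2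
        = A x * f x ^ 2 * W - 2 * (A x * f x) * S2 + A x * S3 := by
      intro x
      have e : ∀ y : V, A x * A y * (f x - f y) ^ 2
          = A x * f x ^ 2 * A y - 2 * (A x * f x) * (A y * f y) + A x * (A y * f y ^ 2) :=
        fun y => by ring
      rw [Finset.sum_congr rfl fun y _ => e y, Finset.sum_add_distrib, Finset.sum_sub_distrib,
        ← Finset.mul_sum, ← Finset.mul_sum, ← Finset.mul_sum, ← hS2, ← hS3, ← hWdef]
    rw [Finset.sum_congr rfl fun x _ => inner x, Finset.sum_add_distrib, Finset.sum_sub_distrib,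
      ← Finset.sum_mul, ← hS3]
    have e2 : ∑ x : V, 2 * (A x * f x) * S2 = 2 * S2 * S2 := by
      rw [Finset.sum_congr rfl fun x _ => (by ring : 2 * (A x * f x) * S2 = (2 * S2) * (A x * f x)),
        ← Finset.mul_sum, ← hS2]
    have e3 : ∑ x : V, A x * S3 = W * S3 := by
      rw [← Finset.sum_mul, ← hWdef]
    rw [e2, e3]
    ring
  rw [h1, h2]
  field_simp
  ring

lemma mul_sum2 {V : Type*} [Fintype V] (r : ℝ) (g : V → V → ℝ) :
    r * ∑ x : V, ∑ y : V, g x y = ∑ x : V, ∑ y : V, r * g x y := by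
  rw [Finset.mul_sum]
  refine Finset.sum_congr rfl fun x _ => ?_
  exact Finset.mul_sum _ _ _

lemma core_bound {V : Type*} [Fintype V] [DecidableEq V]
    (u : V → V → ℝ) (E : V → V → List (Sym2 V)) (L : V → V → ℕ)
    (c : ℝ) (hc0 : 0 ≤ c)
    (hnn : ∀ x y, 0 ≤ u x y)
    (hW : (0:ℝ) < ∑ a, ∑ b, u a b)
    (hnd : ∀ x y, (E x y).Nodup) (hdiag : ∀ x y, ∀ e ∈ E x y, ¬ e.IsDiag)
    (f : V → ℝ)
    (hcs : ∀ x y, (f x - f y) ^ 2 ≤ (L x y : ℝ) * ((E x y).map (gsq f)).sum)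
    (hcT : ∀ a b : V,
      c * (∑ x, ∑ y, if s(a, b) ∈ E x y
            then (∑ y', u x y') * (∑ y', u y y') * (L x y : ℝ) else 0)
        ≤ u a b * (∑ a, ∑ b, u a b)) :
    c * varForm u f ≤ (∑ x, ∑ y, u x y * (f x - f y) ^ 2) / 2 := by
  have hWne : (∑ a, ∑ b, u a b) ≠ 0 := ne_of_gt hW
  have hAnn : ∀ x : V, 0 ≤ ∑ y, u x y := fun x => Finset.sum_nonneg fun y _ => hnn x y
  have hvar : varForm u f
      = (∑ x, ∑ y, (∑ y', u x y') * (∑ y', u y y') * (f x - f y) ^ 2)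
          / (2 * ∑ a, ∑ b, u a b) :=
    sum_var_identity (fun x => ∑ y, u x y) f hW
  have h2 : (∑ x, ∑ y, (∑ y', u x y') * (∑ y', u y y') * (f x - f y) ^ 2)
      ≤ ∑ x, ∑ y, (∑ y', u x y') * (∑ y', u y y')
          * ((L x y : ℝ) * ((E x y).map (gsq f)).sum) := by
    refine Finset.sum_le_sum fun x _ => Finset.sum_le_sum fun y _ => ?_
    exact mul_le_mul_of_nonneg_left (hcs x y) (mul_nonneg (hAnn x) (hAnn y))
  have h3 : ∀ x y : V, (∑ y', u x y') * (∑ y', u y y')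
        * ((L x y : ℝ) * ((E x y).map (gsq f)).sum)
      = (1/2) * ∑ a, ∑ b, (if s(a, b) ∈ E x y
          then (∑ y', u x y') * (∑ y', u y y') * (L x y : ℝ) * (f a - f b) ^ 2 else 0) := by
    intro x y
    have hm := sum_if_mem f (E x y) (hnd x y) (hdiag x y)
    have hpull : ∑ a, ∑ b, (if s(a, b) ∈ E x y
          then (∑ y', u x y') * (∑ y', u y y') * (L x y : ℝ) * (f a - f b) ^ 2 else 0)
        = ((∑ y', u x y') * (∑ y', u y y') * (L x y : ℝ))
            * ∑ a, ∑ b, (if s(a, b) ∈ E x y then (f a - f b) ^ 2 else 0) := by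
      refine Eq.symm ?_
      refine (Finset.mul_sum _ _ _).trans ?_
      refine Finset.sum_congr rfl fun a _ => ?_
      refine (Finset.mul_sum _ _ _).trans ?_
      refine Finset.sum_congr rfl fun b _ => ?_
      by_cases h : s(a, b) ∈ E x y <;> simp [h]
    rw [hpull, hm]
    ring
  have h4 : ∑ x, ∑ y, ∑ a, ∑ b, (if s(a, b) ∈ E x y
          then (∑ y', u x y') * (∑ y', u y y') * (L x y : ℝ) * (f a - f b) ^ 2 else 0)
      = ∑ a, ∑ b, (f a - f b) ^ 2 * (∑ x, ∑ y, if s(a, b) ∈ E x y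
          then (∑ y', u x y') * (∑ y', u y y') * (L x y : ℝ) else 0) := by
    rw [sum_swap4]
    refine Finset.sum_congr rfl fun a _ => Finset.sum_congr rfl fun b _ => ?_
    rw [Finset.mul_sum]
    refine Finset.sum_congr rfl fun x _ => ?_
    rw [Finset.mul_sum]
    refine Finset.sum_congr rfl fun y _ => ?_
    by_cases h : s(a, b) ∈ E x y
    · simp only [if_pos h]; ring
    · simp [h]
  have hM : (∑ x, ∑ y, (∑ y', u x y') * (∑ y', u y y') * (f x - f y) ^ 2)
      ≤ (1/2) * ∑ a, ∑ b, (f a - f b) ^ 2 * (∑ x, ∑ y, if s(a, b) ∈ E x y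
          then (∑ y', u x y') * (∑ y', u y y') * (L x y : ℝ) else 0) := by
    refine h2.trans (le_of_eq ?_)
    calc ∑ x, ∑ y, (∑ y', u x y') * (∑ y', u y y')
            * ((L x y : ℝ) * ((E x y).map (gsq f)).sum)
        = ∑ x, ∑ y, (1/2) * ∑ a, ∑ b, (if s(a, b) ∈ E x y
            then (∑ y', u x y') * (∑ y', u y y') * (L x y : ℝ) * (f a - f b) ^ 2 else 0) :=
          Finset.sum_congr rfl fun x _ => Finset.sum_congr rfl fun y _ => h3 x y
      _ = (1/2) * ∑ x, ∑ y, ∑ a, ∑ b, (if s(a, b) ∈ E x y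
            then (∑ y', u x y') * (∑ y', u y y') * (L x y : ℝ) * (f a - f b) ^ 2 else 0) :=
          (mul_sum2 _ _).symm
      _ = (1/2) * ∑ a, ∑ b, (f a - f b) ^ 2 * (∑ x, ∑ y, if s(a, b) ∈ E x y
            then (∑ y', u x y') * (∑ y', u y y') * (L x y : ℝ) else 0) := by rw [h4]
  have hkey : c * ∑ a, ∑ b, (f a - f b) ^ 2 * (∑ x, ∑ y, if s(a, b) ∈ E x y
          then (∑ y', u x y') * (∑ y', u y y') * (L x y : ℝ) else 0)
      ≤ (∑ a, ∑ b, u a b) * ∑ a, ∑ b, u a b * (f a - f b) ^ 2 := by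
    calc c * ∑ a, ∑ b, (f a - f b) ^ 2 * (∑ x, ∑ y, if s(a, b) ∈ E x y
            then (∑ y', u x y') * (∑ y', u y y') * (L x y : ℝ) else 0)
        = ∑ a, ∑ b, (f a - f b) ^ 2 * (c * (∑ x, ∑ y, if s(a, b) ∈ E x y
            then (∑ y', u x y') * (∑ y', u y y') * (L x y : ℝ) else 0)) := by
          refine (mul_sum2 _ _).trans ?_
          exact Finset.sum_congr rfl fun a _ => Finset.sum_congr rfl fun b _ => by ring
      _ ≤ ∑ a, ∑ b, (f a - f b) ^ 2 * (u a b * ∑ a, ∑ b, u a b) := by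
          refine Finset.sum_le_sum fun a _ => Finset.sum_le_sum fun b _ => ?_
          exact mul_le_mul_of_nonneg_left (hcT a b) (sq_nonneg _)
      _ = (∑ a, ∑ b, u a b) * ∑ a, ∑ b, u a b * (f a - f b) ^ 2 := by
          refine Eq.trans ?_ (mul_sum2 _ _).symm
          exact Finset.sum_congr rfl fun a _ => Finset.sum_congr rfl fun b _ => by ring
  have hD2 : (0:ℝ) ≤ ∑ a, ∑ b, u a b * (f a - f b) ^ 2 :=
    Finset.sum_nonneg fun a _ => Finset.sum_nonneg fun b _ =>
      mul_nonneg (hnn a b) (sq_nonneg _)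
  rw [hvar]
  rw [mul_div_assoc' c _ _]
  rw [div_le_iff₀ (by linarith : (0:ℝ) < 2 * ∑ a, ∑ b, u a b)]
  have step1 : c * (∑ x, ∑ y, (∑ y', u x y') * (∑ y', u y y') * (f x - f y) ^ 2)
      ≤ c * ((1/2) * ∑ a, ∑ b, (f a - f b) ^ 2 * (∑ x, ∑ y, if s(a, b) ∈ E x y
          then (∑ y', u x y') * (∑ y', u y y') * (L x y : ℝ) else 0)) :=
    mul_le_mul_of_nonneg_left hM hc0
  have step2 : c * ((1/2) * ∑ a, ∑ b, (f a - f b) ^ 2 * (∑ x, ∑ y, if s(a, b) ∈ E x y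
          then (∑ y', u x y') * (∑ y', u y y') * (L x y : ℝ) else 0))
      ≤ (1/2) * ((∑ a, ∑ b, u a b) * ∑ a, ∑ b, u a b * (f a - f b) ^ 2) := by
    have := hkey
    nlinarith [hkey]
  refine step1.trans (step2.trans ?_)
  have hx : ∑ x, ∑ y, u x y * (f x - f y) ^ 2 = ∑ a, ∑ b, u a b * (f a - f b) ^ 2 := rfl
  rw [hx]
  nlinarith [mul_nonneg (le_of_lt hW) hD2]


/-- The canonical paths bound. -/
theorem canonical_paths_bound {V : Type*} [Fintype V] [DecidableEq V]
    (G : SimpleGraph V) (hconn : G.Connected) (u : V → V → ℝ)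
    (hsym : ∀ x y, u x y = u y x)
    (hsupp : ∀ x y, 0 < u x y ↔ G.Adj x y) (hnn : ∀ x y, 0 ≤ u x y)
    (Γ : ∀ x y : V, G.Walk x y) (hΓ : ∀ x y, (Γ x y).IsPath) :
    sInf {r : ℝ | ∃ a b, G.Adj a b ∧
        r = (u a b / (∑ x, ∑ y, u x y)) /
          (∑ x, ∑ y, if s(a, b) ∈ (Γ x y).edges
            then piPt u x * piPt u y * ((Γ x y).length : ℝ) else 0)}
      ≤ specGap u := by
  rcases subsingleton_or_nontrivial V with hV | hV
  · have h1 : {r : ℝ | ∃ a b, G.Adj a b ∧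
        r = (u a b / (∑ x, ∑ y, u x y)) /
          (∑ x, ∑ y, if s(a, b) ∈ (Γ x y).edges
            then piPt u x * piPt u y * ((Γ x y).length : ℝ) else 0)} = (∅ : Set ℝ) := by
      ext r
      simp only [Set.mem_setOf_eq, Set.mem_empty_iff_false, iff_false, not_exists]
      rintro a b ⟨hab, -⟩
      exact hab.ne (Subsingleton.elim a b)
    have h2 : {r : ℝ | ∃ f : V → ℝ, (∃ x y, f x ≠ f y) ∧ r = dirichletForm u f / varForm u f}
        = (∅ : Set ℝ) := by
      ext r
      simp only [Set.mem_setOf_eq, Set.mem_empty_iff_false, iff_false, not_exists]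
      rintro f ⟨⟨x, y, hxy⟩, -⟩
      exact hxy (congrArg f (Subsingleton.elim x y))
    unfold specGap
    rw [h1, h2, Real.sInf_empty]
  · have hneV : Nonempty V := hconn.nonempty
    have hax : ∀ x : V, 0 < ∑ y, u x y := by
      intro x
      obtain ⟨y, hy⟩ := exists_ne x
      obtain ⟨w⟩ := hconn.preconnected x y
      have hadj : ∃ z, G.Adj x z := by
        cases w with
        | nil => exact absurd rfl hy
        | cons h p => exact ⟨_, h⟩
      obtain ⟨z, hz⟩ := hadj
      exact Finset.sum_pos' (fun i _ => hnn x i) ⟨z, Finset.mem_univ z, (hsupp x z).mpr hz⟩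
    have hW : (0:ℝ) < ∑ a, ∑ b, u a b :=
      Finset.sum_pos (fun x _ => hax x) Finset.univ_nonempty
    have hWne : (∑ a, ∑ b, u a b) ≠ 0 := ne_of_gt hW
    have hEnn : ∀ r ∈ {r : ℝ | ∃ a b, G.Adj a b ∧
        r = (u a b / (∑ x, ∑ y, u x y)) /
          (∑ x, ∑ y, if s(a, b) ∈ (Γ x y).edges
            then piPt u x * piPt u y * ((Γ x y).length : ℝ) else 0)}, 0 ≤ r := by
      rintro r ⟨a, b, hab, rfl⟩
      refine div_nonneg (div_nonneg (hnn a b) (le_of_lt hW)) ?_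
      refine Finset.sum_nonneg fun x _ => Finset.sum_nonneg fun y _ => ?_
      by_cases h : s(a, b) ∈ (Γ x y).edges
      · rw [if_pos h]
        refine mul_nonneg (mul_nonneg ?_ ?_) (Nat.cast_nonneg _) <;>
          exact div_nonneg (le_of_lt (hax _)) (le_of_lt hW)
      · rw [if_neg h]
    have hbdd : BddBelow {r : ℝ | ∃ a b, G.Adj a b ∧
        r = (u a b / (∑ x, ∑ y, u x y)) /
          (∑ x, ∑ y, if s(a, b) ∈ (Γ x y).edges
            then piPt u x * piPt u y * ((Γ x y).length : ℝ) else 0)} :=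
      ⟨0, fun r hr => hEnn r hr⟩
    have hc0 : 0 ≤ sInf {r : ℝ | ∃ a b, G.Adj a b ∧
        r = (u a b / (∑ x, ∑ y, u x y)) /
          (∑ x, ∑ y, if s(a, b) ∈ (Γ x y).edges
            then piPt u x * piPt u y * ((Γ x y).length : ℝ) else 0)} :=
      Real.sInf_nonneg hEnn
    unfold specGap
    apply le_csInf
    · obtain ⟨x1, y1, hx1y1⟩ := exists_pair_ne V
      refine ⟨_, ⟨fun z => if z = x1 then (1:ℝ) else 0, ⟨x1, y1, ?_⟩, rfl⟩⟩
      simp [hx1y1.symm]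
    · rintro r ⟨f, ⟨x0, y0, hf⟩, rfl⟩
      have hVar : 0 < varForm u f := by
        have hm : f x0 ≠ (∑ z, (∑ y, u z y) * f z) / (∑ a, ∑ b, u a b)
            ∨ f y0 ≠ (∑ z, (∑ y, u z y) * f z) / (∑ a, ∑ b, u a b) := by
          by_contra h
          push_neg at h
          exact hf (h.1.trans h.2.symm)
        have hterm : ∀ x : V, f x ≠ (∑ z, (∑ y, u z y) * f z) / (∑ a, ∑ b, u a b) →
            0 < (∑ y, u x y) * (f x - (∑ z, (∑ y, u z y) * f z) / (∑ a, ∑ b, u a b)) ^ 2 := by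
          intro x hx
          refine mul_pos (hax x) ?_
          exact lt_of_le_of_ne (sq_nonneg _)
            (Ne.symm (pow_ne_zero 2 (sub_ne_zero.mpr hx)))
        refine Finset.sum_pos' (fun x _ => mul_nonneg (le_of_lt (hax x)) (sq_nonneg _)) ?_
        rcases hm with hm | hm
        · exact ⟨x0, Finset.mem_univ x0, hterm x0 hm⟩
        · exact ⟨y0, Finset.mem_univ y0, hterm y0 hm⟩
      rw [le_div_iff₀ hVar]
      have hcT : ∀ a b : V,
          (sInf {r : ℝ | ∃ a b, G.Adj a b ∧
            r = (u a b / (∑ x, ∑ y, u x y)) /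
              (∑ x, ∑ y, if s(a, b) ∈ (Γ x y).edges
                then piPt u x * piPt u y * ((Γ x y).length : ℝ) else 0)})
            * (∑ x, ∑ y, if s(a, b) ∈ (Γ x y).edges
                then (∑ y', u x y') * (∑ y', u y y') * ((Γ x y).length : ℝ) else 0)
          ≤ u a b * (∑ a, ∑ b, u a b) := by
        intro a b
        have hTnn : 0 ≤ ∑ x, ∑ y, (if s(a, b) ∈ (Γ x y).edges
            then (∑ y', u x y') * (∑ y', u y y') * ((Γ x y).length : ℝ) else 0) := by
          refine Finset.sum_nonneg fun x _ => Finset.sum_nonneg fun y _ => ?_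
          by_cases h : s(a, b) ∈ (Γ x y).edges
          · rw [if_pos h]
            exact mul_nonneg (mul_nonneg (le_of_lt (hax x)) (le_of_lt (hax y)))
              (Nat.cast_nonneg _)
          · rw [if_neg h]
        rcases eq_or_lt_of_le hTnn with h0 | hTpos
        · rw [← h0, mul_zero]
          exact mul_nonneg (hnn a b) (le_of_lt hW)
        · have hmem : ∃ x y, s(a, b) ∈ (Γ x y).edges := by
            by_contra hno
            push_neg at hno
            have hz : (∑ x, ∑ y, (if s(a, b) ∈ (Γ x y).edges
                then (∑ y', u x y') * (∑ y', u y y') * ((Γ x y).length : ℝ) else 0)) = 0 :=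
              Finset.sum_eq_zero fun x _ => Finset.sum_eq_zero fun y _ => if_neg (hno x y)
            rw [hz] at hTpos
            exact lt_irrefl 0 hTpos
          obtain ⟨xm, ym, hm⟩ := hmem
          have hadj : G.Adj a b := SimpleGraph.Walk.adj_of_mem_edges _ hm
          have hSsplit : (∑ x, ∑ y, if s(a, b) ∈ (Γ x y).edges
                then piPt u x * piPt u y * ((Γ x y).length : ℝ) else 0)
              = (∑ x, ∑ y, if s(a, b) ∈ (Γ x y).edges
                then (∑ y', u x y') * (∑ y', u y y') * ((Γ x y).length : ℝ) else 0)
                  / (∑ a, ∑ b, u a b) ^ 2 := by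
            rw [Finset.sum_div]
            refine Finset.sum_congr rfl fun x _ => ?_
            rw [Finset.sum_div]
            refine Finset.sum_congr rfl fun y _ => ?_
            by_cases h : s(a, b) ∈ (Γ x y).edges
            · rw [if_pos h, if_pos h]
              unfold piPt
              rw [div_mul_div_comm, div_mul_eq_mul_div, sq]
            · rw [if_neg h, if_neg h, zero_div]
          have hSpos : 0 < ∑ x, ∑ y, (if s(a, b) ∈ (Γ x y).edges
              then piPt u x * piPt u y * ((Γ x y).length : ℝ) else 0) := by
            rw [hSsplit]
            exact div_pos hTpos (by positivity)
          have hmem2 : (u a b / (∑ x, ∑ y, u x y)) /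
              (∑ x, ∑ y, if s(a, b) ∈ (Γ x y).edges
                then piPt u x * piPt u y * ((Γ x y).length : ℝ) else 0)
              ∈ {r : ℝ | ∃ a b, G.Adj a b ∧
                r = (u a b / (∑ x, ∑ y, u x y)) /
                  (∑ x, ∑ y, if s(a, b) ∈ (Γ x y).edges
                    then piPt u x * piPt u y * ((Γ x y).length : ℝ) else 0)} :=
            ⟨a, b, hadj, rfl⟩
          have hcle := csInf_le hbdd hmem2
          have h1 := (le_div_iff₀ hSpos).mp hcle
          have hTS : (∑ x, ∑ y, if s(a, b) ∈ (Γ x y).edges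
                then (∑ y', u x y') * (∑ y', u y y') * ((Γ x y).length : ℝ) else 0)
              = (∑ x, ∑ y, if s(a, b) ∈ (Γ x y).edges
                then piPt u x * piPt u y * ((Γ x y).length : ℝ) else 0)
                  * (∑ a, ∑ b, u a b) ^ 2 := by
            rw [hSsplit]
            field_simp
          rw [hTS, ← mul_assoc]
          calc (sInf _ * (∑ x, ∑ y, if s(a, b) ∈ (Γ x y).edges
                then piPt u x * piPt u y * ((Γ x y).length : ℝ) else 0))
                * (∑ a, ∑ b, u a b) ^ 2
              ≤ (u a b / (∑ x, ∑ y, u x y)) * (∑ a, ∑ b, u a b) ^ 2 :=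
                mul_le_mul_of_nonneg_right h1 (by positivity)
            _ = u a b * (∑ a, ∑ b, u a b) := by
                field_simp
      have := core_bound u (fun x y => (Γ x y).edges) (fun x y => (Γ x y).length)
        (sInf {r : ℝ | ∃ a b, G.Adj a b ∧
            r = (u a b / (∑ x, ∑ y, u x y)) /
              (∑ x, ∑ y, if s(a, b) ∈ (Γ x y).edges
                then piPt u x * piPt u y * ((Γ x y).length : ℝ) else 0)})
        hc0 hnn hW
        (fun x y => (hΓ x y).isTrail.edges_nodup)
        (fun x y e he => G.not_isDiag_of_mem_edgeSet ((Γ x y).edges_subset_edgeSet he))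
        f (fun x y => walk_cs f (Γ x y)) hcT
      exact this
end

section
/- Let G = (V,E) be a finite connected graph and π any strictly positive probability distribution on V. There exists a time-inhomogeneous Markov chain on G (a sequence of transition matrices each supported on edges of G together with self-loops) such that, from any initial distribution, the law of the chain after 2·diam(G) steps equals π exactly. -/
open Finset

/-- Evolution of a distribution under a time-inhomogeneous sequence of kernels:
`evolve P μ t = μ P 1 ⋯ P t`. -/
noncomputable def evolve {V : Type*} [Fintype V] (P : ℕ → V → V → ℝ) (μ : V → ℝ) :
    ℕ → V → ℝ
  | 0 => μ
  | (t + 1) => fun y => ∑ x, evolve P μ t x * P (t + 1) x y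

theorem evolve_succ' {V : Type*} [Fintype V] (P : ℕ → V → V → ℝ) (μ : V → ℝ) (t : ℕ) (y : V) :
    evolve P μ (t + 1) y = ∑ x, evolve P μ t x * P (t + 1) x y := by
  rw [evolve]

/-- The diameter of a finite graph. -/
noncomputable def graphDiam {V : Type*} [Fintype V] (G : SimpleGraph V) : ℕ :=
  univ.sup fun x => univ.sup fun y => G.dist x y

/-- On any finite connected graph `G` and for any strictly positive target distribution `π`,
there is a time-inhomogeneous Markov chain supported on the edges of `G` (plus self-loops)
whose law after `2·diam(G)` steps is exactly `π`, from any initial distribution. -/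
theorem inhomogeneous_perfect_mixing {V : Type*} [Fintype V]
    (G : SimpleGraph V) (hG : G.Connected)
    (π : V → ℝ) (hpos : ∀ x, 0 < π x) (hsum : ∑ x, π x = 1) :
    ∃ P : ℕ → V → V → ℝ,
      (∀ t x y, 0 ≤ P t x y) ∧
      (∀ t x, ∑ y, P t x y = 1) ∧
      (∀ t x y, P t x y ≠ 0 → G.Adj x y ∨ x = y) ∧
      ∀ μ0 : V → ℝ, (∀ x, 0 ≤ μ0 x) → ∑ x, μ0 x = 1 →
        ∀ y, evolve P μ0 (2 * graphDiam G) y = π y := by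
  classical
  obtain ⟨r⟩ := hG.nonempty
  set D := graphDiam G with hDdef
  have hdist_le : ∀ x : V, G.dist x r ≤ D := by
    intro x
    have h1 : G.dist x r ≤ univ.sup (fun y => G.dist x y) :=
      Finset.le_sup (Finset.mem_univ r)
    have h2 : univ.sup (fun y => G.dist x y)
        ≤ univ.sup (fun x => univ.sup fun y => G.dist x y) :=
      Finset.le_sup (f := fun x => univ.sup fun y => G.dist x y) (Finset.mem_univ x)
    exact h1.trans h2
  -- a one-step-closer-to-`r` function
  have hstep : ∀ x : V, x ≠ r → ∃ y, G.Adj x y ∧ G.dist y r + 1 = G.dist x r := by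
    intro x hx
    obtain ⟨p, hp⟩ := hG.exists_walk_length_eq_dist x r
    cases p with
    | nil => exact absurd rfl hx
    | @cons _ w _ h q =>
      refine ⟨w, h, ?_⟩
      have h1 : G.dist w r ≤ q.length := SimpleGraph.dist_le q
      have h2 : G.dist x r ≤ G.dist x w + G.dist w r := hG.dist_triangle
      have h3 : G.dist x w ≤ 1 := by
        simpa using SimpleGraph.dist_le (SimpleGraph.Walk.cons h SimpleGraph.Walk.nil)
      have h4 : q.length + 1 = G.dist x r := by
        simpa [SimpleGraph.Walk.length_cons] using hp
      omega
  obtain ⟨f, hfr, hfadj, hfdist⟩ :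
      ∃ f : V → V, f r = r ∧ (∀ x, x ≠ r → G.Adj x (f x)) ∧
        (∀ x, x ≠ r → G.dist (f x) r + 1 = G.dist x r) := by
    refine ⟨fun x => if hx : x = r then r else Classical.choose (hstep x hx), by simp, ?_, ?_⟩
    · intro x hx
      simpa [hx] using (Classical.choose_spec (hstep x hx)).1
    · intro x hx
      simpa [hx] using (Classical.choose_spec (hstep x hx)).2
  -- iterating f at least `dist x r` times reaches r
  have hiter : ∀ m (x : V), G.dist x r ≤ m → f^[m] x = r := by
    intro m
    induction m with
    | zero =>
      intro x hx
      have : G.dist x r = 0 := Nat.le_zero.mp hx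
      simpa using (hG.dist_eq_zero_iff).mp this
    | succ n ih =>
      intro x hx
      rw [Function.iterate_succ_apply]
      by_cases hxr : x = r
      · rw [hxr, hfr]
        exact ih r (by rw [SimpleGraph.dist_self]; exact Nat.zero_le n)
      · apply ih
        have := hfdist x hxr
        omega
  have hiterD : ∀ x : V, f^[D] x = r := fun x => hiter D x (hdist_le x)
  -- the intermediate distributions
  set M : ℕ → V → ℝ := fun k y => ∑ z, if f^[D - k] z = y then π z else 0 with hM
  have hMnn : ∀ k y, 0 ≤ M k y := by
    intro k y
    apply Finset.sum_nonneg
    intro z _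
    split_ifs
    · exact (hpos z).le
    · exact le_refl 0
  -- a composition lemma for pushforwards
  have hcomp : ∀ (g : V → V) (ν : V → ℝ) (y : V),
      (∑ x, if f x = y then (∑ z, if g z = x then ν z else 0) else 0)
        = ∑ z, if f (g z) = y then ν z else 0 := by
    intro g ν y
    have h1 : ∀ x, (if f x = y then (∑ z, if g z = x then ν z else 0) else 0)
        = ∑ z, if g z = x then (if f x = y then ν z else 0) else 0 := by
      intro x
      split_ifs with h
      · simp [h]
      · simp [h]
    rw [Finset.sum_congr rfl fun x _ => h1 x, Finset.sum_comm]
    refine Finset.sum_congr rfl fun z _ => ?_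
    simp
  have hrec : ∀ k, k < D → ∀ x, M k x = ∑ y, if f y = x then M (k + 1) y else 0 := by
    intro k hk x
    have hm : D - k = (D - (k + 1)) + 1 := by omega
    have : M k x = ∑ z, if f (f^[D - (k + 1)] z) = x then π z else 0 := by
      simp only [hM, hm, Function.iterate_succ_apply']
    rw [this, ← hcomp (f^[D - (k + 1)]) π x]
  have hMge : ∀ k, k < D → ∀ y, M (k + 1) y ≤ M k (f y) := by
    intro k hk y
    rw [hrec k hk (f y)]
    have h := Finset.single_le_sum (f := fun w => if f w = f y then M (k + 1) w else 0)
      (fun w _ => by split_ifs; exacts [hMnn _ _, le_refl 0])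
      (Finset.mem_univ y)
    simpa using h
  have hM0 : ∀ y, M 0 y = if r = y then 1 else 0 := by
    intro y
    simp only [hM, Nat.sub_zero]
    have h1 : (∑ z, if f^[D] z = y then π z else 0) = ∑ z, if r = y then π z else 0 :=
      Finset.sum_congr rfl fun z _ => by rw [hiterD z]
    rw [h1]
    split_ifs with h
    · simpa using hsum
    · simp
  have hMD : ∀ y, M D y = π y := by
    intro y
    simp only [hM, Nat.sub_self, Function.iterate_zero_apply]
    simp
  -- the transition kernels
  set Q : ℕ → V → V → ℝ := fun t x y =>
    if t ≤ D then (if y = f x then 1 else 0)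
    else if t ≤ 2 * D then
      (if M (t - D - 1) x = 0 then (if y = x then 1 else 0)
       else (if f y = x then M (t - D) y / M (t - D - 1) x else 0))
    else (if y = x then 1 else 0) with hQ
  refine ⟨Q, ?_, ?_, ?_, ?_⟩
  · -- nonnegativity
    intro t x y
    simp only [hQ]
    split_ifs <;> first
      | exact zero_le_one
      | exact le_refl 0
      | exact div_nonneg (hMnn _ _) (hMnn _ _)
  · -- row sums
    intro t x
    simp only [hQ]
    by_cases h1 : t ≤ D
    · simp [h1]
    · by_cases h2 : t ≤ 2 * D
      · simp only [h1, h2, if_false, if_true]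
        by_cases h3 : M (t - D - 1) x = 0
        · simp [h3]
        · simp only [h3, if_false]
          obtain ⟨k, rfl⟩ : ∃ k, t = D + k + 1 := ⟨t - D - 1, by omega⟩
          have e1 : D + k + 1 - D - 1 = k := by omega
          have e2 : D + k + 1 - D = k + 1 := by omega
          rw [e1] at h3 ⊢
          rw [e2]
          have hk : k < D := by omega
          have h4 : ∀ y : V, (if f y = x then M (k + 1) y / M k x else 0)
              = (if f y = x then M (k + 1) y else 0) / M k x := by
            intro y; split_ifs <;> simp
          rw [Finset.sum_congr rfl fun y _ => h4 y, ← Finset.sum_div,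
            ← hrec _ hk x, div_self h3]
      · simp [h1, h2]
  · -- support
    intro t x y hP
    simp only [hQ] at hP
    by_cases h1 : t ≤ D
    · rw [if_pos h1] at hP
      by_cases hy : y = f x
      · by_cases hxr : x = r
        · right
          rw [hy, hxr, hfr]
        · left
          rw [hy]
          exact hfadj x hxr
      · simp [hy] at hP
    · rw [if_neg h1] at hP
      by_cases h2 : t ≤ 2 * D
      · rw [if_pos h2] at hP
        by_cases h3 : M (t - D - 1) x = 0
        · rw [if_pos h3] at hP
          by_cases hy : y = x
          · right; exact hy.symm
          · simp [hy] at hP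
        · rw [if_neg h3] at hP
          by_cases hy : f y = x
          · by_cases hyr : y = r
            · right
              rw [← hy, hyr, hfr]
            · left
              rw [← hy]
              exact (hfadj y hyr).symm
          · simp [hy] at hP
      · rw [if_neg h2] at hP
        by_cases hy : y = x
        · right; exact hy.symm
        · simp [hy] at hP
  · -- perfect mixing
    intro μ0 hμ0nn hμ0sum y
    -- Phase 1: contraction to r
    have phase1 : ∀ t, t ≤ D → ∀ y,
        evolve Q μ0 t y = ∑ z, if f^[t] z = y then μ0 z else 0 := by
      intro t
      induction t with
      | zero => intro _ y; show μ0 y = _; exact ((Finset.sum_eq_single y (fun b _ hb => if_neg hb) (fun h => absurd (Finset.mem_univ y) h)).trans (if_pos rfl)).symm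
      | succ n ih =>
        intro ht y
        rw [evolve_succ']
        have hn : n ≤ D := by omega
        have e : ∀ x : V, evolve Q μ0 n x * Q (n + 1) x y
            = if f x = y then (∑ z, if f^[n] z = x then μ0 z else 0) else 0 := by
          intro x
          rw [ih hn x]
          simp only [hQ]
          rw [if_pos ht]
          by_cases h : y = f x
          · simp [h]
          · rw [if_neg h, if_neg (fun hh : f x = y => h hh.symm), mul_zero]
        rw [Finset.sum_congr rfl fun x _ => e x, hcomp (f^[n]) μ0 y]
        refine Finset.sum_congr rfl fun z _ => ?_
        rw [← Function.iterate_succ_apply' f n z]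
    -- at time D all mass is at r
    have atD : ∀ y, evolve Q μ0 D y = M 0 y := by
      intro y
      rw [phase1 D (le_refl D) y, hM0 y]
      have h1 : (∑ z, if f^[D] z = y then μ0 z else 0) = ∑ z, if r = y then μ0 z else 0 :=
        Finset.sum_congr rfl fun z _ => by rw [hiterD z]
      rw [h1]
      split_ifs with h
      · simpa using hμ0sum
      · simp
    -- Phase 2: expansion to π
    have phase2 : ∀ k, k ≤ D → ∀ y, evolve Q μ0 (D + k) y = M k y := by
      intro k
      induction k with
      | zero => intro _ y; simpa using atD y
      | succ n ih =>
        intro hk y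
        have hn : n ≤ D := by omega
        have hnd : n < D := by omega
        show evolve Q μ0 ((D + n) + 1) y = M (n + 1) y
        rw [evolve_succ']
        have ht1 : ¬ (D + n + 1 ≤ D) := by omega
        have ht2 : D + n + 1 ≤ 2 * D := by omega
        have ht3 : D + n + 1 - D - 1 = n := by omega
        have ht4 : D + n + 1 - D = n + 1 := by omega
        have e : ∀ x : V, evolve Q μ0 (D + n) x * Q (D + n + 1) x y
            = if f y = x then (if M n x = 0 then 0 else M (n + 1) y) else 0 := by
          intro x
          rw [ih hn x]
          simp only [hQ]
          rw [if_neg ht1, if_pos ht2, ht3, ht4]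
          by_cases h0 : M n x = 0
          · simp [h0]
          · rw [if_neg h0]
            by_cases hfy : f y = x
            · rw [if_pos hfy, if_pos hfy, if_neg h0, mul_comm, div_mul_cancel₀ _ h0]
            · simp [hfy]
        rw [Finset.sum_congr rfl fun x _ => e x]
        rw [Finset.sum_ite_eq univ (f y) (fun x => if M n x = 0 then 0 else M (n + 1) y),
          if_pos (Finset.mem_univ _)]
        by_cases hz : M n (f y) = 0
        · rw [if_pos hz]
          have h1 : M (n + 1) y ≤ 0 := hz ▸ hMge n hnd y
          exact (le_antisymm h1 (hMnn _ _)).symm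
        · rw [if_neg hz]
    have h := phase2 D (le_refl D) y
    rw [two_mul D, h, hMD y]
end

section
/- Let G = (V,E) be a finite graph, f : V → ℝ≥0, and define S_t = {u ∈ V : f(u)² > t} for t ≥ 0. Let G⃗_f be the directed graph with an edge (u,v) of weight f(v)² − f(u)² whenever {u,v} ∈ E and f(u) < f(v). Then ∫₀^∞ ν(E(S_t, S_tᶜ)) dt ≤ 2·ν(G⃗_f), where ν(E(S_t,S_tᶜ)) is the maximum (unweighted) matching size among edges crossing the cut at level t, and ν(G⃗_f) is the maximum weight of a directed matching in G⃗_f. -/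
open Finset MeasureTheory
open scoped Classical

/-- The maximum weight of a directed matching in the directed graph `G⃗_f`, which has an edge
`(u,v)` of weight `f(v)² − f(u)²` whenever `{u,v} ∈ E` and `f(u) < f(v)`. -/
noncomputable def dirMatchW {V : Type*} [Fintype V] (G : SimpleGraph V) (f : V → ℝ) : ℝ :=
  sSup {x : ℝ | ∃ M : Finset (V × V),
    (∀ p ∈ M, G.Adj p.1 p.2 ∧ f p.1 < f p.2) ∧
    (∀ p ∈ M, ∀ q ∈ M, p ≠ q → p.1 ≠ q.1 ∧ p.2 ≠ q.2) ∧
    x = ∑ p ∈ M, (f p.2 ^ 2 - f p.1 ^ 2)}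

section Aux
variable {V : Type*} [Fintype V] (G : SimpleGraph V) (f : V → ℝ)

/-- directed matching predicate -/
def IsDM (M : Finset (V × V)) : Prop :=
  (∀ p ∈ M, G.Adj p.1 p.2 ∧ f p.1 < f p.2) ∧
  (∀ p ∈ M, ∀ q ∈ M, p ≠ q → p.1 ≠ q.1 ∧ p.2 ≠ q.2)

noncomputable def wgt (M : Finset (V × V)) : ℝ := ∑ p ∈ M, (f p.2 ^ 2 - f p.1 ^ 2)

variable {G f}

lemma exists_max_dm : ∃ F : Finset (V × V), IsDM G f F ∧
    ∀ M : Finset (V × V), IsDM G f M → wgt f M ≤ wgt f F := by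
  classical
  have hne : (Finset.univ.powerset.filter (fun M => IsDM G f M)).Nonempty := by
    refine ⟨∅, ?_⟩
    simp [IsDM]
  obtain ⟨F, hF, hmax⟩ := Finset.exists_max_image _ (wgt f) hne
  refine ⟨F, (Finset.mem_filter.mp hF).2, fun M hM => ?_⟩
  exact hmax M (Finset.mem_filter.mpr ⟨Finset.mem_powerset.mpr (Finset.subset_univ M), hM⟩)

lemma wgt_le_dirMatchW {F : Finset (V × V)} (hF : IsDM G f F) :
    wgt f F ≤ dirMatchW G f := by
  classical
  have hsub : {x : ℝ | ∃ M : Finset (V × V),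
      (∀ p ∈ M, G.Adj p.1 p.2 ∧ f p.1 < f p.2) ∧
      (∀ p ∈ M, ∀ q ∈ M, p ≠ q → p.1 ≠ q.1 ∧ p.2 ≠ q.2) ∧
      x = ∑ p ∈ M, (f p.2 ^ 2 - f p.1 ^ 2)} ⊆
      ↑(Finset.univ.powerset.image (wgt f)) := by
    rintro x ⟨M, _, _, rfl⟩
    simp only [Finset.coe_image, Set.mem_image, Finset.mem_coe, Finset.mem_powerset]
    exact ⟨M, by simp [Finset.subset_univ], rfl⟩
  have hbdd : BddAbove {x : ℝ | ∃ M : Finset (V × V),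
      (∀ p ∈ M, G.Adj p.1 p.2 ∧ f p.1 < f p.2) ∧
      (∀ p ∈ M, ∀ q ∈ M, p ≠ q → p.1 ≠ q.1 ∧ p.2 ≠ q.2) ∧
      x = ∑ p ∈ M, (f p.2 ^ 2 - f p.1 ^ 2)} :=
    (((Finset.univ.powerset.image (wgt f)).finite_toSet).subset hsub |>.bddAbove)
  exact le_csSup hbdd ⟨F, hF.1, hF.2, rfl⟩

lemma dirMatchW_nonneg : 0 ≤ dirMatchW G f := by
  have h0 : IsDM G f (∅ : Finset (V × V)) := by constructor <;> simp
  have := wgt_le_dirMatchW h0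
  simpa [wgt] using this

/-- Exchange argument: any cut matching at level `t` has size at most twice the number of
arcs of a maximum weight directed matching crossing level `t`. -/
lemma cut_le_two_cross (hf : ∀ u, 0 ≤ f u)
    {F : Finset (V × V)} (hF : IsDM G f F)
    (hmax : ∀ M : Finset (V × V), IsDM G f M → wgt f M ≤ wgt f F)
    (t : ℝ) {M : Finset (V × V)}
    (hM1 : ∀ p ∈ M, p.1 ∈ (univ.filter fun u => t < f u ^ 2) ∧
        p.2 ∉ (univ.filter fun u => t < f u ^ 2) ∧ G.Adj p.1 p.2)
    (hM2 : ∀ p ∈ M, ∀ q ∈ M, p ≠ q → p.1 ≠ q.1 ∧ p.1 ≠ q.2 ∧ p.2 ≠ q.1 ∧ p.2 ≠ q.2) :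
    M.card ≤ 2 * (F.filter fun p => f p.1 ^ 2 ≤ t ∧ t < f p.2 ^ 2).card := by
  classical
  set Fc := F.filter fun p => f p.1 ^ 2 ≤ t ∧ t < f p.2 ^ 2 with hFc
  -- basic facts about M's arcs
  have hMfacts : ∀ p ∈ M, f p.2 ^ 2 ≤ t ∧ t < f p.1 ^ 2 ∧ G.Adj p.1 p.2 := by
    intro p hp
    obtain ⟨h1, h2, h3⟩ := hM1 p hp
    simp only [Finset.mem_filter, Finset.mem_univ, true_and] at h1 h2
    exact ⟨not_lt.mp h2, h1, h3⟩
  -- Key claim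
  have key : ∀ p ∈ M, p.2 ∈ Fc.image Prod.fst ∨ p.1 ∈ Fc.image Prod.snd := by
    intro p hp
    by_contra hcon
    push_neg at hcon
    obtain ⟨hc1, hc2⟩ := hcon
    simp only [Finset.mem_image, not_exists, not_and] at hc1 hc2
    obtain ⟨hp2t, hp1t, hadj⟩ := hMfacts p hp
    have hflt : f p.2 < f p.1 := by nlinarith [hf p.1, hf p.2]
    set F' := insert (p.2, p.1) (F.filter fun r => r.1 ≠ p.2 ∧ r.2 ≠ p.1) with hF'
    have hnewnot : (p.2, p.1) ∉ F.filter fun r => r.1 ≠ p.2 ∧ r.2 ≠ p.1 := by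
      simp
    have hFdm' : IsDM G f F' := by
      constructor
      · intro q hq
        rcases Finset.mem_insert.mp hq with h | h
        · subst h; exact ⟨hadj.symm, hflt⟩
        · exact hF.1 q (Finset.mem_filter.mp h).1
      · intro a ha b hb hab
        rcases Finset.mem_insert.mp ha with ha' | ha' <;>
          rcases Finset.mem_insert.mp hb with hb' | hb'
        · exact absurd (ha'.trans hb'.symm) hab
        · obtain ⟨hbF, hb1, hb2⟩ := Finset.mem_filter.mp hb'
          subst ha'
          exact ⟨Ne.symm hb1, Ne.symm hb2⟩
        · obtain ⟨haF, ha1, ha2⟩ := Finset.mem_filter.mp ha'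
          subst hb'
          exact ⟨ha1, ha2⟩
        · exact hF.2 a (Finset.mem_filter.mp ha').1 b (Finset.mem_filter.mp hb').1 hab
    -- weight strictly increases: contradiction
    have hw : wgt f F < wgt f F' := by
      have hsplit : wgt f F
          = (∑ r ∈ F.filter fun r => r.1 ≠ p.2 ∧ r.2 ≠ p.1, (f r.2 ^ 2 - f r.1 ^ 2))
            + ∑ r ∈ F.filter fun r => ¬(r.1 ≠ p.2 ∧ r.2 ≠ p.1), (f r.2 ^ 2 - f r.1 ^ 2) :=
        (Finset.sum_filter_add_sum_filter_not F _ _).symm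
      have hF'val : wgt f F' = (f p.1 ^ 2 - f p.2 ^ 2)
          + ∑ r ∈ F.filter fun r => r.1 ≠ p.2 ∧ r.2 ≠ p.1, (f r.2 ^ 2 - f r.1 ^ 2) := by
        rw [hF', wgt, Finset.sum_insert hnewnot]
      -- the removed part
      set D1 := F.filter fun r => r.1 = p.2 with hD1
      set D2 := F.filter fun r => r.2 = p.1 with hD2
      have hnoboth : ∀ r ∈ F, ¬(r.1 = p.2 ∧ r.2 = p.1) := by
        rintro r hr ⟨h1, h2⟩
        exact hc1 r (Finset.mem_filter.mpr ⟨hr, by rw [h1, h2]; exact ⟨hp2t, hp1t⟩⟩) h1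
      have hDeq : F.filter (fun r => ¬(r.1 ≠ p.2 ∧ r.2 ≠ p.1)) = D1 ∪ D2 := by
        rw [hD1, hD2, ← Finset.filter_or]
        apply Finset.filter_congr
        intro r hr
        constructor
        · intro h; rcases not_and_or.mp h with h | h
          · exact Or.inl (not_not.mp h)
          · exact Or.inr (not_not.mp h)
        · rintro (h | h) <;> simp [h]
      have hdisj : Disjoint D1 D2 := by
        rw [Finset.disjoint_left]
        intro r hr1 hr2
        exact hnoboth r (Finset.mem_filter.mp hr1).1
          ⟨(Finset.mem_filter.mp hr1).2, (Finset.mem_filter.mp hr2).2⟩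
      have hD1card : D1.card ≤ 1 := by
        rw [Finset.card_le_one]
        intro a ha b hb
        by_contra hne
        exact (hF.2 a (Finset.mem_filter.mp ha).1 b (Finset.mem_filter.mp hb).1 hne).1
          ((Finset.mem_filter.mp ha).2.trans (Finset.mem_filter.mp hb).2.symm)
      have hD2card : D2.card ≤ 1 := by
        rw [Finset.card_le_one]
        intro a ha b hb
        by_contra hne
        exact (hF.2 a (Finset.mem_filter.mp ha).1 b (Finset.mem_filter.mp hb).1 hne).2
          ((Finset.mem_filter.mp ha).2.trans (Finset.mem_filter.mp hb).2.symm)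
      have hD1bound : ∀ r ∈ D1, f r.2 ^ 2 - f r.1 ^ 2 ≤ t - f p.2 ^ 2 := by
        intro r hr
        obtain ⟨hrF, hr1⟩ := Finset.mem_filter.mp hr
        have hnotc : r ∉ Fc := fun h => hc1 r h hr1
        have : ¬(f r.1 ^ 2 ≤ t ∧ t < f r.2 ^ 2) := by
          intro h; exact hnotc (Finset.mem_filter.mpr ⟨hrF, h⟩)
        have h1 : f r.1 ^ 2 ≤ t := by rw [hr1]; exact hp2t
        have h2 : f r.2 ^ 2 ≤ t := not_lt.mp (fun h => this ⟨h1, h⟩)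
        rw [hr1]; linarith
      have hD2bound : ∀ r ∈ D2, f r.2 ^ 2 - f r.1 ^ 2 < f p.1 ^ 2 - t := by
        intro r hr
        obtain ⟨hrF, hr2⟩ := Finset.mem_filter.mp hr
        have hnotc : r ∉ Fc := fun h => hc2 r h hr2
        have : ¬(f r.1 ^ 2 ≤ t ∧ t < f r.2 ^ 2) := by
          intro h; exact hnotc (Finset.mem_filter.mpr ⟨hrF, h⟩)
        have h2 : t < f r.2 ^ 2 := by rw [hr2]; exact hp1t
        have h1 : t < f r.1 ^ 2 := not_le.mp (fun h => this ⟨h, h2⟩)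
        rw [hr2]; linarith
      have hsum1 : ∑ r ∈ D1, (f r.2 ^ 2 - f r.1 ^ 2) ≤ t - f p.2 ^ 2 := by
        calc ∑ r ∈ D1, (f r.2 ^ 2 - f r.1 ^ 2) ≤ D1.card • (t - f p.2 ^ 2) :=
              Finset.sum_le_card_nsmul D1 _ _ hD1bound
          _ ≤ 1 • (t - f p.2 ^ 2) := by
              apply nsmul_le_nsmul_left (by linarith) hD1card
          _ = t - f p.2 ^ 2 := one_smul _ _
      have hsum2 : ∑ r ∈ D2, (f r.2 ^ 2 - f r.1 ^ 2) < f p.1 ^ 2 - t := by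
        rcases Finset.eq_empty_or_nonempty D2 with h | h
        · rw [h]; simp; linarith
        · have : D2.card = 1 := le_antisymm hD2card (Finset.card_pos.mpr h)
          obtain ⟨a, ha⟩ := Finset.card_eq_one.mp this
          rw [ha, Finset.sum_singleton]
          exact hD2bound a (ha ▸ Finset.mem_singleton_self a)
      have : ∑ r ∈ F.filter (fun r => ¬(r.1 ≠ p.2 ∧ r.2 ≠ p.1)), (f r.2 ^ 2 - f r.1 ^ 2)
          < f p.1 ^ 2 - f p.2 ^ 2 := by
        rw [hDeq, Finset.sum_union hdisj]
        linarith
      rw [hsplit, hF'val]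
      linarith
    exact absurd (hmax F' hFdm') (not_le.mpr hw)
  -- counting
  have hsubset : M ⊆ (M.filter fun p => p.2 ∈ Fc.image Prod.fst)
      ∪ (M.filter fun p => p.1 ∈ Fc.image Prod.snd) := by
    intro p hp
    rcases key p hp with h | h
    · exact Finset.mem_union_left _ (Finset.mem_filter.mpr ⟨hp, h⟩)
    · exact Finset.mem_union_right _ (Finset.mem_filter.mpr ⟨hp, h⟩)
  have h1 : (M.filter fun p => p.2 ∈ Fc.image Prod.fst).card ≤ Fc.card := by
    calc (M.filter fun p => p.2 ∈ Fc.image Prod.fst).card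
        ≤ (Fc.image Prod.fst).card := by
          apply Finset.card_le_card_of_injOn Prod.snd
          · intro p hp; exact (Finset.mem_filter.mp hp).2
          · intro p hp q hq hpq
            by_contra hne
            exact (hM2 p (Finset.mem_filter.mp hp).1 q (Finset.mem_filter.mp hq).1 hne).2.2.2 hpq
      _ ≤ Fc.card := Finset.card_image_le
  have h2 : (M.filter fun p => p.1 ∈ Fc.image Prod.snd).card ≤ Fc.card := by
    calc (M.filter fun p => p.1 ∈ Fc.image Prod.snd).card
        ≤ (Fc.image Prod.snd).card := by
          apply Finset.card_le_card_of_injOn Prod.fst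
          · intro p hp; exact (Finset.mem_filter.mp hp).2
          · intro p hp q hq hpq
            by_contra hne
            exact (hM2 p (Finset.mem_filter.mp hp).1 q (Finset.mem_filter.mp hq).1 hne).1 hpq
      _ ≤ Fc.card := Finset.card_image_le
  calc M.card ≤ ((M.filter fun p => p.2 ∈ Fc.image Prod.fst)
      ∪ (M.filter fun p => p.1 ∈ Fc.image Prod.snd)).card := Finset.card_le_card hsubset
    _ ≤ (M.filter fun p => p.2 ∈ Fc.image Prod.fst).card
        + (M.filter fun p => p.1 ∈ Fc.image Prod.snd).card := Finset.card_union_le _ _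
    _ ≤ 2 * Fc.card := by omega

lemma cutMatchNum_le (hf : ∀ u, 0 ≤ f u)
    {F : Finset (V × V)} (hF : IsDM G f F)
    (hmax : ∀ M : Finset (V × V), IsDM G f M → wgt f M ≤ wgt f F) (t : ℝ) :
    cutMatchNum G (univ.filter fun u => t < f u ^ 2)
      ≤ 2 * (F.filter fun p => f p.1 ^ 2 ≤ t ∧ t < f p.2 ^ 2).card := by
  classical
  apply csSup_le
  · exact ⟨0, ∅, by simp, by simp, by simp⟩
  · rintro n ⟨M, hM1, hM2, rfl⟩
    exact cut_le_two_cross hf hF hmax t hM1 hM2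
end Aux

/-- Coarea-type inequality for matchings: with sweep sets `S_t = {u : f(u)² > t}`,
`∫₀^∞ ν(E(S_t, S_tᶜ)) dt ≤ 2 ν(G⃗_f)`. -/
theorem integral_cut_matching_le {V : Type*} [Fintype V]
    (G : SimpleGraph V) (f : V → ℝ) (hf : ∀ u, 0 ≤ f u) :
    ∫ t in Set.Ioi (0 : ℝ),
        ((cutMatchNum G (univ.filter fun u => t < f u ^ 2) : ℝ))
      ≤ 2 * dirMatchW G f := by
  classical
  obtain ⟨F, hF, hmax⟩ := exists_max_dm (G := G) (f := f)
  set g : ℝ → ℝ := fun t =>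
    2 * ∑ p ∈ F, Set.indicator (Set.Ico (f p.1 ^ 2) (f p.2 ^ 2)) (fun _ => (1 : ℝ)) t with hg
  have hint : Integrable g (volume.restrict (Set.Ioi (0 : ℝ))) := by
    apply Integrable.const_mul
    apply integrable_finset_sum
    intro p hp
    exact (integrable_indicator_iff measurableSet_Ico).mpr
      ((integrableOn_const_iff).mpr (Or.inr measure_Ico_lt_top)) |>.restrict
  have hle : ∀ t : ℝ, ((cutMatchNum G (univ.filter fun u => t < f u ^ 2) : ℝ)) ≤ g t := by
    intro t
    have h := cutMatchNum_le hf hF hmax t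
    have hcard : ((F.filter fun p => f p.1 ^ 2 ≤ t ∧ t < f p.2 ^ 2).card : ℝ)
        = ∑ p ∈ F, Set.indicator (Set.Ico (f p.1 ^ 2) (f p.2 ^ 2)) (fun _ => (1 : ℝ)) t := by
      rw [Finset.card_filter]
      push_cast
      apply Finset.sum_congr rfl
      intro p hp
      by_cases hc : f p.1 ^ 2 ≤ t ∧ t < f p.2 ^ 2
      · simp [hc, Set.indicator_of_mem, Set.mem_Ico.mpr hc]
      · rw [Set.indicator_of_notMem (by simpa [Set.mem_Ico] using hc)]
        simp [hc]
    calc ((cutMatchNum G (univ.filter fun u => t < f u ^ 2) : ℝ))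
        ≤ ((2 * (F.filter fun p => f p.1 ^ 2 ≤ t ∧ t < f p.2 ^ 2).card : ℕ) : ℝ) := by
          exact_mod_cast h
      _ = g t := by push_cast [hcard]; ring
  have hnonneg : ∀ t : ℝ, 0 ≤ ((cutMatchNum G (univ.filter fun u => t < f u ^ 2) : ℝ)) := by
    intro t; positivity
  have step1 : ∫ t in Set.Ioi (0 : ℝ),
      ((cutMatchNum G (univ.filter fun u => t < f u ^ 2) : ℝ)) ≤ ∫ t in Set.Ioi (0 : ℝ), g t :=
    integral_mono_of_nonneg (Filter.Eventually.of_forall hnonneg) hint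
      (Filter.Eventually.of_forall hle)
  have step2 : ∫ t in Set.Ioi (0 : ℝ), g t ≤ 2 * wgt f F := by
    have hgint : ∀ p ∈ F, Integrable
        (fun t => Set.indicator (Set.Ico (f p.1 ^ 2) (f p.2 ^ 2)) (fun _ => (1 : ℝ)) t)
        (volume.restrict (Set.Ioi (0 : ℝ))) := by
      intro p hp
      exact (integrable_indicator_iff measurableSet_Ico).mpr
        ((integrableOn_const_iff).mpr (Or.inr measure_Ico_lt_top)) |>.restrict
    have : ∫ t in Set.Ioi (0 : ℝ), g t
        = 2 * ∑ p ∈ F, ∫ t in Set.Ioi (0 : ℝ),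
            Set.indicator (Set.Ico (f p.1 ^ 2) (f p.2 ^ 2)) (fun _ => (1 : ℝ)) t := by
      rw [hg]
      rw [MeasureTheory.integral_const_mul]
      rw [integral_finset_sum _ hgint]
    rw [this]
    have hb : ∀ p ∈ F, ∫ t in Set.Ioi (0 : ℝ),
        Set.indicator (Set.Ico (f p.1 ^ 2) (f p.2 ^ 2)) (fun _ => (1 : ℝ)) t
        ≤ f p.2 ^ 2 - f p.1 ^ 2 := by
      intro p hp
      have hab : f p.1 ^ 2 ≤ f p.2 ^ 2 := by
        have := (hF.1 p hp).2
        have h1 := hf p.1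
        nlinarith
      rw [integral_indicator_const (1 : ℝ) measurableSet_Ico]
      rw [Measure.real_def, Measure.restrict_apply measurableSet_Ico]
      simp only [smul_eq_mul, mul_one]
      calc (volume (Set.Ico (f p.1 ^ 2) (f p.2 ^ 2) ∩ Set.Ioi 0)).toReal
          ≤ (volume (Set.Ico (f p.1 ^ 2) (f p.2 ^ 2))).toReal := by
            apply ENNReal.toReal_mono (by simp [Real.volume_Ico])
            exact measure_mono Set.inter_subset_left
        _ = f p.2 ^ 2 - f p.1 ^ 2 := by
            simp [Real.volume_Ico, ENNReal.toReal_ofReal (by linarith : (0:ℝ) ≤ f p.2 ^ 2 - f p.1 ^ 2)]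
    have := Finset.sum_le_sum hb
    rw [wgt]
    linarith
  have step3 : wgt f F ≤ dirMatchW G f := wgt_le_dirMatchW hF
  linarith
end

section
/- Let G = (V,E) be a finite graph and f : V → ℝ≥0 not identically zero. Let λ be the infimum over functions g : V → ℝ≥0 satisfying g(u)+g(v) ≥ (f(u)−f(v))² for all edges {u,v}, of (Σ_u g(u)) / (Σ_u f(u)²). Then there exists a set S contained in the support of f with matching conductance Υ(S) = ν(E(S,Sᶜ))/|S| ≤ 8√(2λ). -/
set_option maxHeartbeats 1000000

open Finset
open scoped Classical

/-- The value `λ`: the infimum over admissible `g` of `(Σ_u g(u)) / (Σ_u f(u)²)`. -/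
noncomputable def lamVal {V : Type*} [Fintype V] (G : SimpleGraph V) (f : V → ℝ) : ℝ :=
  sInf {r : ℝ | ∃ g : V → ℝ, (∀ u, 0 ≤ g u) ∧
    (∀ u v, G.Adj u v → (f u - f v) ^ 2 ≤ g u + g v) ∧
    r = (∑ u, g u) / (∑ u, f u ^ 2)}

namespace SweepAux

variable (A : Finset ℝ)

/-- largest element of `A` strictly below `a`, or `0`. -/
noncomputable def lfun (a : ℝ) : ℝ :=
  if h : (A.filter (fun x => x < a)).Nonempty then (A.filter (fun x => x < a)).max' h else 0

lemma lfun_nonneg (hA : ∀ x ∈ A, 0 < x) (a : ℝ) : 0 ≤ lfun A a := by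
  unfold lfun
  split_ifs with h
  · exact le_of_lt (hA _ (mem_filter.mp ((A.filter (fun x => x < a)).max'_mem h)).1)
  · exact le_refl 0

lemma lfun_lt {a : ℝ} (ha : 0 < a) : lfun A a < a := by
  unfold lfun
  split_ifs with h
  · exact (mem_filter.mp ((A.filter (fun x => x < a)).max'_mem h)).2
  · exact ha

lemma le_lfun {b a : ℝ} (hx : b ∈ A) (hxa : b < a) : b ≤ lfun A a := by
  have hne : (A.filter (fun x => x < a)).Nonempty := ⟨b, mem_filter.mpr ⟨hx, hxa⟩⟩
  unfold lfun
  rw [dif_pos hne]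
  exact le_max' (A.filter (fun x => x < a)) b (mem_filter.mpr ⟨hx, hxa⟩)

/-- Telescoping sum over a downward-closed subset of `A`. -/
lemma tele (hA : ∀ x ∈ A, 0 < x) (B : Finset ℝ) :
    B ⊆ A → (∀ b ∈ B, ∀ x ∈ A, x ≤ b → x ∈ B) →
      ∀ hB : B.Nonempty, ∑ a ∈ B, (a ^ 2 - (lfun A a) ^ 2) = (B.max' hB) ^ 2 := by
  induction B using Finset.strongInductionOn with
  | _ B ih =>
    intro hBA hcl hB
    set m := B.max' hB with hm
    have hmB : m ∈ B := B.max'_mem hB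
    by_cases h : (A.filter (fun x => x < m)).Nonempty
    · have hlm : lfun A m = (A.filter (fun x => x < m)).max' h := dif_pos h
      have hlmA : lfun A m ∈ A := by
        rw [hlm]; exact (mem_filter.mp ((A.filter (fun x => x < m)).max'_mem h)).1
      have hlmlt : lfun A m < m := by
        rw [hlm]; exact (mem_filter.mp ((A.filter (fun x => x < m)).max'_mem h)).2
      have hlmB : lfun A m ∈ B := hcl m hmB _ hlmA (le_of_lt hlmlt)
      have herase_ne : (B.erase m).Nonempty :=
        ⟨_, mem_erase.mpr ⟨ne_of_lt hlmlt, hlmB⟩⟩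
      have hsub : B.erase m ⊂ B := erase_ssubset hmB
      have hBA' : B.erase m ⊆ A := (erase_subset _ _).trans hBA
      have hcl' : ∀ b ∈ B.erase m, ∀ x ∈ A, x ≤ b → x ∈ B.erase m := by
        intro b hb x hxA hxb
        obtain ⟨hbne, hbB⟩ := mem_erase.mp hb
        have hbm : b < m := lt_of_le_of_ne (le_max' _ _ hbB) hbne
        refine mem_erase.mpr ⟨?_, hcl b hbB x hxA hxb⟩
        exact ne_of_lt (lt_of_le_of_lt hxb hbm)
      have hmax' : (B.erase m).max' herase_ne = lfun A m := by
        apply le_antisymm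
        · apply max'_le
          intro x hx
          obtain ⟨hxne, hxB⟩ := mem_erase.mp hx
          exact le_lfun A (hBA hxB) (lt_of_le_of_ne (le_max' _ _ hxB) hxne)
        · exact le_max' _ _ (mem_erase.mpr ⟨ne_of_lt hlmlt, hlmB⟩)
      have hsum := ih _ hsub hBA' hcl' herase_ne
      rw [hmax'] at hsum
      have hkey := Finset.sum_erase_add B (fun a => a ^ 2 - (lfun A a) ^ 2) hmB
      rw [← hkey, hsum]
      ring
    · have hlm : lfun A m = 0 := dif_neg h
      have hBsing : B = {m} := by
        apply Finset.eq_singleton_iff_unique_mem.mpr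
        refine ⟨hmB, ?_⟩
        intro x hxB
        by_contra hne2
        have hxm : x < m := lt_of_le_of_ne (le_max' _ _ hxB) hne2
        exact h ⟨x, mem_filter.mpr ⟨hBA hxB, hxm⟩⟩
      rw [hBsing]
      simp [hlm]

/-- Disjoint-interval bound: sum of gap lengths over a subset of `A` whose intervals
lie in `[lo, hi]` is at most `hi - lo`. -/
lemma ivbound (hA : ∀ x ∈ A, 0 < x) (lo : ℝ) (T : Finset ℝ) :
    T ⊆ A → ∀ hi : ℝ, (∀ a ∈ T, lo ≤ (lfun A a) ^ 2 ∧ a ^ 2 ≤ hi) → lo ≤ hi →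
      ∑ a ∈ T, (a ^ 2 - (lfun A a) ^ 2) ≤ hi - lo := by
  induction T using Finset.strongInductionOn with
  | _ T ih =>
    intro hTA hi hbd hlohi
    rcases T.eq_empty_or_nonempty with hT | hT
    · simp [hT]; linarith
    · set m := T.max' hT with hm
      have hmT : m ∈ T := T.max'_mem hT
      have hmA : m ∈ A := hTA hmT
      have hmpos : 0 < m := hA _ hmA
      have hsub : T.erase m ⊂ T := erase_ssubset hmT
      have hTA' : T.erase m ⊆ A := (erase_subset _ _).trans hTA
      have hlom : lo ≤ (lfun A m) ^ 2 := (hbd m hmT).1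
      have hbd' : ∀ a ∈ T.erase m, lo ≤ (lfun A a) ^ 2 ∧ a ^ 2 ≤ (lfun A m) ^ 2 := by
        intro a ha
        obtain ⟨hane, haT⟩ := mem_erase.mp ha
        refine ⟨(hbd a haT).1, ?_⟩
        have ham : a < m := lt_of_le_of_ne (le_max' _ _ haT) hane
        have hal : a ≤ lfun A m := le_lfun A (hTA haT) ham
        have hapos : 0 < a := hA _ (hTA haT)
        nlinarith
      have hsum := ih _ hsub hTA' _ hbd' hlom
      have hkey := Finset.sum_erase_add T (fun a => a ^ 2 - (lfun A a) ^ 2) hmT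
      rw [← hkey]
      have hm2 : m ^ 2 ≤ hi := (hbd m hmT).2
      linarith

lemma exists_matching {V : Type*} [Fintype V] (G : SimpleGraph V) (S : Finset V) :
    ∃ M : Finset (V × V),
      (∀ p ∈ M, p.1 ∈ S ∧ p.2 ∉ S ∧ G.Adj p.1 p.2) ∧
      (∀ p ∈ M, ∀ q ∈ M, p ≠ q → p.1 ≠ q.1 ∧ p.1 ≠ q.2 ∧ p.2 ≠ q.1 ∧ p.2 ≠ q.2) ∧
      M.card = cutMatchNum G S := by
  have h0 : (0:ℕ) ∈ {n : ℕ | ∃ M : Finset (V × V),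
      (∀ p ∈ M, p.1 ∈ S ∧ p.2 ∉ S ∧ G.Adj p.1 p.2) ∧
      (∀ p ∈ M, ∀ q ∈ M, p ≠ q → p.1 ≠ q.1 ∧ p.1 ≠ q.2 ∧ p.2 ≠ q.1 ∧ p.2 ≠ q.2) ∧
      M.card = n} := by
    show ∃ M : Finset (V × V), _ ∧ _ ∧ M.card = 0
    exact ⟨∅, by simp, by simp, by simp⟩
  have hbdd : BddAbove {n : ℕ | ∃ M : Finset (V × V),
      (∀ p ∈ M, p.1 ∈ S ∧ p.2 ∉ S ∧ G.Adj p.1 p.2) ∧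
      (∀ p ∈ M, ∀ q ∈ M, p ≠ q → p.1 ≠ q.1 ∧ p.1 ≠ q.2 ∧ p.2 ≠ q.1 ∧ p.2 ≠ q.2) ∧
      M.card = n} := by
    refine ⟨Fintype.card (V × V), ?_⟩
    rintro n ⟨M, -, -, hc⟩
    rw [← hc]
    exact le_trans (card_le_univ M) (le_of_eq Finset.card_univ)
  have hmem := Nat.sSup_mem ⟨0, h0⟩ hbdd
  exact hmem

lemma cut_le_card {V : Type*} [Fintype V] (G : SimpleGraph V) (S : Finset V) :
    cutMatchNum G S ≤ S.card := by
  have h0 : (0:ℕ) ∈ {n : ℕ | ∃ M : Finset (V × V),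
      (∀ p ∈ M, p.1 ∈ S ∧ p.2 ∉ S ∧ G.Adj p.1 p.2) ∧
      (∀ p ∈ M, ∀ q ∈ M, p ≠ q → p.1 ≠ q.1 ∧ p.1 ≠ q.2 ∧ p.2 ≠ q.1 ∧ p.2 ≠ q.2) ∧
      M.card = n} := by
    show ∃ M : Finset (V × V), _ ∧ _ ∧ M.card = 0
    exact ⟨∅, by simp, by simp, by simp⟩
  show sSup {n : ℕ | ∃ M : Finset (V × V),
      (∀ p ∈ M, p.1 ∈ S ∧ p.2 ∉ S ∧ G.Adj p.1 p.2) ∧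
      (∀ p ∈ M, ∀ q ∈ M, p ≠ q → p.1 ≠ q.1 ∧ p.1 ≠ q.2 ∧ p.2 ≠ q.1 ∧ p.2 ≠ q.2) ∧
      M.card = n} ≤ S.card
  apply csSup_le ⟨0, h0⟩
  rintro n ⟨M, hM1, hM2, rfl⟩
  apply Finset.card_le_card_of_injOn (fun p => p.1)
  · intro p hp
    exact (hM1 p hp).1
  · intro p hp q hq hpq
    by_contra hne2
    exact (hM2 p (Finset.mem_coe.mp hp) q (Finset.mem_coe.mp hq) hne2).1 hpq

lemma final_contra (E F lam eps : ℝ) (hFpos : 0 < F) (hE0 : 0 ≤ E)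
    (hmain : 8 * Real.sqrt (2 * E * F) < 4 * Real.sqrt (2 * E * F) + 2 * E)
    (hEF : E / F < lam + eps) (hlam : lam < 1 / 128) (heps : eps ≤ 1 / 512) : False := by
  have hsnn2 : 0 ≤ Real.sqrt (2 * E * F) := Real.sqrt_nonneg _
  have hEpos : 0 < E := by linarith
  have hssq : Real.sqrt (2 * E * F) ^ 2 = 2 * E * F := Real.sq_sqrt (by positivity)
  have hstep : Real.sqrt (2 * E * F) * Real.sqrt (2 * E * F) < (E / 2) * (E / 2) :=
    mul_self_lt_mul_self hsnn2 (by linarith)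
  have hq : 2 * E * F < E ^ 2 / 4 := by nlinarith [hstep, hssq]
  have h8F : 8 * F < E := by
    by_contra hcon2
    push_neg at hcon2
    have hmul : E * E ≤ E * (8 * F) := mul_le_mul_of_nonneg_left hcon2 (le_of_lt hEpos)
    nlinarith
  have hEltF : E < F := by
    have h2 : E < (lam + eps) * F := (div_lt_iff₀ hFpos).mp hEF
    nlinarith
  linarith

end SweepAux

/-- Sweep-cut lemma: there is a set `S` inside the support of `f` whose matching conductance
is at most `8·√(2λ)`. -/
theorem exists_sweep_set {V : Type*} [Fintype V] (G : SimpleGraph V)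
    (f : V → ℝ) (hf : ∀ u, 0 ≤ f u) (hne : ∃ u, f u ≠ 0) :
    ∃ S : Finset V, S.Nonempty ∧ (∀ u ∈ S, 0 < f u) ∧
      (cutMatchNum G S : ℝ) / S.card ≤ 8 * Real.sqrt (2 * lamVal G f) := by
  classical
  by_contra hcon
  push_neg at hcon
  obtain ⟨u₀, hu₀⟩ := hne
  have hu₀' : 0 < f u₀ := lt_of_le_of_ne (hf u₀) (Ne.symm hu₀)
  set F : ℝ := ∑ u, f u ^ 2 with hF
  have hFpos : 0 < F := by
    rw [hF]
    exact Finset.sum_pos' (fun u _ => sq_nonneg (f u)) ⟨u₀, mem_univ u₀, pow_pos hu₀' 2⟩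
  clear_value F
  set A : Finset ℝ := (univ.filter (fun u => 0 < f u)).image f with hA
  have hApos : ∀ x ∈ A, 0 < x := by
    intro x hx
    obtain ⟨u, hu, rfl⟩ := mem_image.mp hx
    exact (mem_filter.mp hu).2
  have hAne : A.Nonempty :=
    ⟨f u₀, mem_image.mpr ⟨u₀, mem_filter.mpr ⟨mem_univ _, hu₀'⟩, rfl⟩⟩
  set Sa : ℝ → Finset V := fun a => univ.filter (fun u => a ≤ f u) with hSa
  have hSane : ∀ a ∈ A, (Sa a).Nonempty := by
    intro a ha
    obtain ⟨u, hu, rfl⟩ := mem_image.mp ha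
    exact ⟨u, mem_filter.mpr ⟨mem_univ _, le_refl _⟩⟩
  have hSapos : ∀ a ∈ A, ∀ u ∈ Sa a, 0 < f u := by
    intro a ha u hu
    exact lt_of_lt_of_le (hApos a ha) (mem_filter.mp hu).2
  have hSacard : ∀ a ∈ A, 0 < ((Sa a).card : ℝ) := by
    intro a ha
    exact_mod_cast Finset.card_pos.mpr (hSane a ha)
  set lam := lamVal G f with hlam
  have hratio : ∀ a ∈ A, 8 * Real.sqrt (2 * lam) <
      (cutMatchNum G (Sa a) : ℝ) / ((Sa a).card) :=
    fun a ha => hcon (Sa a) (hSane a ha) (hSapos a ha)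
  have hratio1 : ∀ a ∈ A, (cutMatchNum G (Sa a) : ℝ) / ((Sa a).card) ≤ 1 := by
    intro a ha
    rw [div_le_one (hSacard a ha)]
    exact_mod_cast SweepAux.cut_le_card G (Sa a)
  -- the admissible set is nonempty
  have hadm0 : ∀ u v, G.Adj u v →
      (f u - f v) ^ 2 ≤ (fun _ : V => 2 * F) u + (fun _ : V => 2 * F) v := by
    intro u v _
    have h1 : f u ^ 2 ≤ F := by
      rw [hF]; exact Finset.single_le_sum (fun w _ => sq_nonneg (f w)) (mem_univ u)
    have h2 : f v ^ 2 ≤ F := by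
      rw [hF]; exact Finset.single_le_sum (fun w _ => sq_nonneg (f w)) (mem_univ v)
    simp only
    nlinarith [sq_nonneg (f u + f v)]
  have hSetNe : {r : ℝ | ∃ g : V → ℝ, (∀ u, 0 ≤ g u) ∧
      (∀ u v, G.Adj u v → (f u - f v) ^ 2 ≤ g u + g v) ∧
      r = (∑ u, g u) / (∑ u, f u ^ 2)}.Nonempty :=
    ⟨_, ⟨fun _ => 2 * F, fun _ => by dsimp only; linarith, hadm0, rfl⟩⟩
  have hlam_eq : lam = sInf {r : ℝ | ∃ g : V → ℝ, (∀ u, 0 ≤ g u) ∧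
      (∀ u v, G.Adj u v → (f u - f v) ^ 2 ≤ g u + g v) ∧
      r = (∑ u, g u) / (∑ u, f u ^ 2)} := hlam
  clear_value lam
  have hlam_nonneg : 0 ≤ lam := by
    rw [hlam_eq]
    apply le_csInf hSetNe
    rintro r ⟨g, hg0, -, rfl⟩
    apply div_nonneg (Finset.sum_nonneg fun u _ => hg0 u)
      (Finset.sum_nonneg fun u _ => sq_nonneg (f u))
  have hsqrt_nn : 0 ≤ Real.sqrt (2 * lam) := Real.sqrt_nonneg _
  have hlam_small : lam < 1 / 128 := by
    obtain ⟨a₀, ha₀⟩ := hAne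
    have h1 := hratio a₀ ha₀
    have h2 := hratio1 a₀ ha₀
    have h8 : Real.sqrt (2 * lam) < 1 / 8 := by linarith
    have hsq : Real.sqrt (2 * lam) ^ 2 = 2 * lam := Real.sq_sqrt (by linarith)
    nlinarith
  -- minimal gap over the (finitely many) level sets
  obtain ⟨astar, hastar, hminstar⟩ := Finset.exists_min_image A
    (fun a => (cutMatchNum G (Sa a) : ℝ) / ((Sa a).card)) hAne
  set d : ℝ := (cutMatchNum G (Sa astar) : ℝ) / ((Sa astar).card) - 8 * Real.sqrt (2 * lam)
    with hd
  have hdle : ∀ a ∈ A, d ≤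
      (cutMatchNum G (Sa a) : ℝ) / ((Sa a).card) - 8 * Real.sqrt (2 * lam) := by
    intro a ha
    have h2 := hminstar a ha
    rw [hd]
    linarith
  have hdpos : 0 < d := by
    rw [hd]
    have h2 := hratio astar hastar
    linarith
  have hd1 : d ≤ 1 := by
    rw [hd]
    have h2 := hratio1 astar hastar
    linarith
  clear_value d
  set ε : ℝ := (d / 16) ^ 2 / 2 with hε
  have hεpos : 0 < ε := by
    rw [hε]
    have h2 : 0 < (d / 16) ^ 2 := pow_pos (by linarith) 2
    linarith
  have hεsmall : ε ≤ 1 / 512 := by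
    rw [hε]; nlinarith
  have hsqrt2eps : Real.sqrt (2 * ε) = d / 16 := by
    rw [hε, show 2 * ((d / 16) ^ 2 / 2) = (d / 16) ^ 2 by ring]
    exact Real.sqrt_sq (by linarith)
  clear_value ε
  -- obtain a near-optimal admissible g
  obtain ⟨r, hrmem, hrlt⟩ := exists_lt_of_csInf_lt hSetNe
    (show sInf _ < lam + ε by rw [← hlam_eq]; linarith)
  obtain ⟨g, hg0, hadm, hrEq⟩ := hrmem
  set E : ℝ := ∑ u, g u with hE
  have hE0 : 0 ≤ E := by
    rw [hE]; exact Finset.sum_nonneg fun u _ => hg0 u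
  have hrEF : r = E / F := by rw [hrEq, ← hF]
  have hr0 : 0 ≤ r := by
    rw [hrEF]; exact div_nonneg hE0 (le_of_lt hFpos)
  clear_value E
  set c' : ℝ := 8 * Real.sqrt (2 * r) with hc'
  have hc'le : c' ≤ 8 * Real.sqrt (2 * lam) + d / 2 := by
    have h1 : Real.sqrt (2 * r) ≤ Real.sqrt (2 * lam + 2 * ε) :=
      Real.sqrt_le_sqrt (by linarith)
    have hx : (0:ℝ) ≤ 2 * lam := by linarith
    have hy : (0:ℝ) ≤ 2 * ε := by linarith
    have hsum : 2 * lam + 2 * ε ≤ (Real.sqrt (2 * lam) + Real.sqrt (2 * ε)) ^ 2 := by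
      nlinarith [Real.sq_sqrt hx, Real.sq_sqrt hy, Real.sqrt_nonneg (2 * lam),
        Real.sqrt_nonneg (2 * ε)]
    have h2 : Real.sqrt (2 * lam + 2 * ε) ≤ Real.sqrt (2 * lam) + Real.sqrt (2 * ε) := by
      calc Real.sqrt (2 * lam + 2 * ε)
          ≤ Real.sqrt ((Real.sqrt (2 * lam) + Real.sqrt (2 * ε)) ^ 2) :=
            Real.sqrt_le_sqrt hsum
        _ = Real.sqrt (2 * lam) + Real.sqrt (2 * ε) := Real.sqrt_sq (by positivity)
    rw [hc']
    rw [hsqrt2eps] at h2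
    linarith
  clear_value c'
  have hclt : ∀ a ∈ A, c' * ((Sa a).card : ℝ) < (cutMatchNum G (Sa a) : ℝ) := by
    intro a ha
    have h1 := hdle a ha
    have h2 : c' < (cutMatchNum G (Sa a) : ℝ) / ((Sa a).card) := by linarith
    exact (lt_div_iff₀ (hSacard a ha)).mp h2
  -- choose matchings
  have hMex : ∀ a : ℝ, ∃ M : Finset (V × V),
      a ∈ A → ((∀ p ∈ M, p.1 ∈ Sa a ∧ p.2 ∉ Sa a ∧ G.Adj p.1 p.2) ∧
        (∀ p ∈ M, ∀ q ∈ M, p ≠ q → p.1 ≠ q.1 ∧ p.1 ≠ q.2 ∧ p.2 ≠ q.1 ∧ p.2 ≠ q.2) ∧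
        M.card = cutMatchNum G (Sa a)) := by
    intro a
    obtain ⟨M, h1, h2, h3⟩ := SweepAux.exists_matching G (Sa a)
    exact ⟨M, fun _ => ⟨h1, h2, h3⟩⟩
  choose Mc hMc using hMex
  set ch : V × V → V := fun p => if g p.2 ≤ g p.1 then p.1 else p.2 with hch
  set Ca : ℝ → Finset V := fun a => (Mc a).image ch with hCa
  have hCacard : ∀ a ∈ A, (Ca a).card = cutMatchNum G (Sa a) := by
    intro a ha
    obtain ⟨hp, hd2, hc⟩ := hMc a ha
    rw [hCa]
    simp only
    rw [Finset.card_image_of_injOn, hc]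
    intro p hp' q hq' hpq
    by_contra hne2
    obtain ⟨h1, h2, h3, h4⟩ := hd2 p (Finset.mem_coe.mp hp') q (Finset.mem_coe.mp hq') hne2
    rw [hch] at hpq
    simp only at hpq
    split_ifs at hpq
    · exact h1 hpq
    · exact h2 hpq
    · exact h3 hpq
    · exact h4 hpq
  -- (F1) mass identity
  have hFsum : ∑ a ∈ A, ((Sa a).card : ℝ) * (a ^ 2 - (SweepAux.lfun A a) ^ 2) = F := by
    have step1 : ∀ a ∈ A, ((Sa a).card : ℝ) * (a ^ 2 - (SweepAux.lfun A a) ^ 2)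
        = ∑ u ∈ univ, (if a ≤ f u then (a ^ 2 - (SweepAux.lfun A a) ^ 2) else 0) := by
      intro a _
      rw [Finset.sum_ite, Finset.sum_const_zero, add_zero, Finset.sum_const, nsmul_eq_mul]
    rw [Finset.sum_congr rfl step1, Finset.sum_comm, hF]
    apply Finset.sum_congr rfl
    intro u _
    rw [← Finset.sum_filter]
    by_cases hu : 0 < f u
    · have hmem : f u ∈ A := mem_image.mpr ⟨u, mem_filter.mpr ⟨mem_univ _, hu⟩, rfl⟩
      have hBne : (A.filter (fun a => a ≤ f u)).Nonempty :=
        ⟨f u, mem_filter.mpr ⟨hmem, le_refl _⟩⟩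
      have hmax : (A.filter (fun a => a ≤ f u)).max' hBne = f u := by
        apply le_antisymm
        · apply max'_le; intro x hx; exact (mem_filter.mp hx).2
        · exact le_max' (A.filter (fun a => a ≤ f u)) (f u)
            (mem_filter.mpr ⟨hmem, le_refl (f u)⟩)
      have htele := SweepAux.tele A hApos (A.filter (fun a => a ≤ f u)) (filter_subset _ _)
        (fun b hb x hxA hxb => mem_filter.mpr ⟨hxA, le_trans hxb (mem_filter.mp hb).2⟩) hBne
      rw [htele, hmax]
    · have hfu : f u = 0 := le_antisymm (not_lt.mp hu) (hf u)
      have hempty : A.filter (fun a => a ≤ f u) = ∅ := by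
        apply Finset.filter_eq_empty_iff.mpr
        intro a ha
        rw [hfu]
        exact not_le.mpr (hApos a ha)
      rw [hempty, Finset.sum_empty, hfu]
      ring
  -- (F2) strict comparison
  have hstrict : c' * F < ∑ a ∈ A, ((Ca a).card : ℝ) * (a ^ 2 - (SweepAux.lfun A a) ^ 2) := by
    rw [← hFsum, Finset.mul_sum]
    apply Finset.sum_lt_sum_of_nonempty hAne
    intro a ha
    have h1 : c' * ((Sa a).card : ℝ) < (cutMatchNum G (Sa a) : ℝ) := hclt a ha
    have h2 : (0:ℝ) < a ^ 2 - (SweepAux.lfun A a) ^ 2 := by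
      have hl1 := SweepAux.lfun_lt A (hApos a ha)
      have hl2 := SweepAux.lfun_nonneg A hApos a
      nlinarith [hApos a ha]
    have h3 : ((Ca a).card : ℝ) = (cutMatchNum G (Sa a) : ℝ) := by
      exact_mod_cast hCacard a ha
    rw [h3]
    nlinarith
  -- (F3) charging bound
  have hswap : ∑ a ∈ A, ((Ca a).card : ℝ) * (a ^ 2 - (SweepAux.lfun A a) ^ 2)
      ≤ ∑ w ∈ univ, (4 * f w * Real.sqrt (2 * g w) + 2 * g w) := by
    have step1 : ∀ a ∈ A, ((Ca a).card : ℝ) * (a ^ 2 - (SweepAux.lfun A a) ^ 2)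
        = ∑ w ∈ univ, (if w ∈ Ca a then (a ^ 2 - (SweepAux.lfun A a) ^ 2) else 0) := by
      intro a _
      have hfilter : univ.filter (fun w => w ∈ Ca a) = Ca a := by
        ext w; simp
      rw [Finset.sum_ite, Finset.sum_const_zero, add_zero, Finset.sum_const, nsmul_eq_mul,
        hfilter]
    rw [Finset.sum_congr rfl step1, Finset.sum_comm]
    apply Finset.sum_le_sum
    intro w _
    rw [← Finset.sum_filter]
    have hTsub : A.filter (fun a => w ∈ Ca a) ⊆ A := filter_subset _ _
    have hs2 : (0:ℝ) ≤ 2 * g w := by linarith [hg0 w]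
    have hsq : Real.sqrt (2 * g w) ^ 2 = 2 * g w := Real.sq_sqrt hs2
    have hsnn : 0 ≤ Real.sqrt (2 * g w) := Real.sqrt_nonneg _
    have key : ∀ a ∈ A.filter (fun a => w ∈ Ca a),
        (f w) ^ 2 - 2 * f w * Real.sqrt (2 * g w) ≤ (SweepAux.lfun A a) ^ 2 ∧
        a ^ 2 ≤ (f w) ^ 2 + 2 * f w * Real.sqrt (2 * g w) + 2 * g w := by
      intro a ha'
      obtain ⟨haA, hwCa⟩ := mem_filter.mp ha'
      obtain ⟨hp, hd2, hc⟩ := hMc a haA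
      rw [hCa] at hwCa
      simp only at hwCa
      obtain ⟨p, hpM, hpw⟩ := mem_image.mp hwCa
      obtain ⟨hp1, hp2, hadj⟩ := hp p hpM
      have hen : (f p.1 - f p.2) ^ 2 ≤ g p.1 + g p.2 := hadm _ _ hadj
      have hfp1 : a ≤ f p.1 := by
        rw [hSa] at hp1; exact (mem_filter.mp hp1).2
      have hfp2 : f p.2 < a := by
        by_contra hge
        exact hp2 (by rw [hSa]; exact mem_filter.mpr ⟨mem_univ _, not_lt.mp hge⟩)
      have hl_nn : 0 ≤ SweepAux.lfun A a := SweepAux.lfun_nonneg A hApos a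
      have hapos : 0 < a := hApos a haA
      rw [hch] at hpw
      simp only at hpw
      by_cases hgc : g p.2 ≤ g p.1
      · rw [if_pos hgc] at hpw
        subst hpw
        -- w = p.1 : inside endpoint
        have hen2 : (f p.1 - f p.2) ^ 2 ≤ 2 * g p.1 := by linarith
        have hvl : f p.2 ≤ SweepAux.lfun A a := by
          rcases lt_or_eq_of_le (hf p.2) with hpos | hzero
          · exact SweepAux.le_lfun A
              (mem_image.mpr ⟨p.2, mem_filter.mpr ⟨mem_univ _, hpos⟩, rfl⟩) hfp2
          · rw [← hzero]; exact hl_nn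
        have hfge : f p.2 ≤ f p.1 := le_trans (le_of_lt hfp2) hfp1
        have hdiff : f p.1 - f p.2 ≤ Real.sqrt (2 * g p.1) := by
          have h0 : 0 ≤ f p.1 - f p.2 := by linarith
          calc f p.1 - f p.2 = Real.sqrt ((f p.1 - f p.2) ^ 2) := (Real.sqrt_sq h0).symm
            _ ≤ _ := Real.sqrt_le_sqrt hen2
        constructor
        · have hprod : (f p.1 - f p.2) * (f p.1 + f p.2) ≤
              Real.sqrt (2 * g p.1) * (2 * f p.1) := by
            apply mul_le_mul hdiff (by linarith [hf p.2]) (by linarith [hf p.2]) hsnn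
          nlinarith [hf p.2, hl_nn, hvl]
        · nlinarith [hf p.1, hsnn, hg0 p.1, mul_nonneg (hf p.1) hsnn]
      · rw [if_neg hgc] at hpw
        subst hpw
        -- w = p.2 : outside endpoint
        have hgw : g p.1 ≤ g p.2 := le_of_lt (not_le.mp hgc)
        have hen2 : (f p.1 - f p.2) ^ 2 ≤ 2 * g p.2 := by linarith
        have hwl : f p.2 ≤ SweepAux.lfun A a := by
          rcases lt_or_eq_of_le (hf p.2) with hpos | hzero
          · exact SweepAux.le_lfun A
              (mem_image.mpr ⟨p.2, mem_filter.mpr ⟨mem_univ _, hpos⟩, rfl⟩) hfp2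
          · rw [← hzero]; exact hl_nn
        have hdiff : f p.1 - f p.2 ≤ Real.sqrt (2 * g p.2) := by
          have h0 : 0 ≤ f p.1 - f p.2 := by linarith
          calc f p.1 - f p.2 = Real.sqrt ((f p.1 - f p.2) ^ 2) := (Real.sqrt_sq h0).symm
            _ ≤ _ := Real.sqrt_le_sqrt hen2
        constructor
        · nlinarith [hf p.2, hl_nn, hwl, mul_nonneg (hf p.2) hsnn]
        · have h1 : a ≤ f p.2 + Real.sqrt (2 * g p.2) := by linarith
          have h2 : a * a ≤ (f p.2 + Real.sqrt (2 * g p.2)) * (f p.2 + Real.sqrt (2 * g p.2)) :=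
            mul_self_le_mul_self (le_of_lt hapos) h1
          nlinarith [hsq]
    have hlohi : (f w) ^ 2 - 2 * f w * Real.sqrt (2 * g w) ≤
        (f w) ^ 2 + 2 * f w * Real.sqrt (2 * g w) + 2 * g w := by
      nlinarith [hf w, hsnn, hg0 w, mul_nonneg (hf w) hsnn]
    have hiv := SweepAux.ivbound A hApos _ (A.filter (fun a => w ∈ Ca a)) hTsub _ key hlohi
    linarith
  -- (F4) Cauchy–Schwarz
  have hCS : ∑ w ∈ univ, f w * Real.sqrt (2 * g w) ≤ Real.sqrt (2 * E * F) := by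
    have h1 := Finset.sum_mul_sq_le_sq_mul_sq univ f (fun w => Real.sqrt (2 * g w))
    have h2 : ∑ w ∈ univ, (Real.sqrt (2 * g w)) ^ 2 = 2 * E := by
      rw [hE, Finset.mul_sum]
      apply Finset.sum_congr rfl
      intro w _
      rw [Real.sq_sqrt (by linarith [hg0 w] : (0:ℝ) ≤ 2 * g w)]
    rw [h2, ← hF] at h1
    have hnn : 0 ≤ ∑ w ∈ univ, f w * Real.sqrt (2 * g w) :=
      Finset.sum_nonneg fun w _ => mul_nonneg (hf w) (Real.sqrt_nonneg _)
    have h3 : (∑ w ∈ univ, f w * Real.sqrt (2 * g w)) ^ 2 ≤ 2 * E * F := by nlinarith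
    exact (Real.le_sqrt hnn (by nlinarith)).mpr h3
  have hsum_le : ∑ w ∈ univ, (4 * f w * Real.sqrt (2 * g w) + 2 * g w)
      ≤ 4 * Real.sqrt (2 * E * F) + 2 * E := by
    rw [Finset.sum_add_distrib]
    have e1 : ∑ w ∈ univ, 4 * f w * Real.sqrt (2 * g w)
        = 4 * ∑ w ∈ univ, f w * Real.sqrt (2 * g w) := by
      rw [Finset.mul_sum]
      apply Finset.sum_congr rfl
      intro w _
      ring
    have e2 : ∑ w ∈ univ, 2 * g w = 2 * E := by rw [hE, Finset.mul_sum]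
    rw [e1, e2]
    linarith
  -- final numeric contradiction
  have hc'F : c' * F = 8 * Real.sqrt (2 * E * F) := by
    have h2 : (0:ℝ) ≤ 2 * (E / F) := by
      have h3 := div_nonneg hE0 (le_of_lt hFpos)
      linarith
    have h4 : Real.sqrt (2 * E * F) = Real.sqrt ((2 * (E / F)) * F ^ 2) := by
      congr 1
      field_simp
    rw [hc', hrEF, h4, Real.sqrt_mul h2, Real.sqrt_sq (le_of_lt hFpos)]
    ring
  have hmain : 8 * Real.sqrt (2 * E * F) < 4 * Real.sqrt (2 * E * F) + 2 * E := by
    calc 8 * Real.sqrt (2 * E * F) = c' * F := hc'F.symm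
      _ < _ := hstrict
      _ ≤ _ := hswap
      _ ≤ _ := hsum_le
  exact SweepAux.final_contra E F lam ε hFpos hE0 hmain
    (by rw [← hrEF]; linarith) hlam_small hεsmall
end

section
/- Easy direction of the matching-conductance Cheeger inequality: for any finite graph G, the one-dimensional relaxation value λ*(G) satisfies λ*(G) ≤ 2·Υ*(G), where Υ*(G) is the matching conductance of G. -/
open Finset
open scoped Classical

/-- The one-dimensional relaxation value `λ*(G)`: the infimum over pairs `(f, g)` with
`Σ f = 0`, `f ≢ 0`, `g ≥ 0`, and `g(u)+g(v) ≥ (f(u)−f(v))²` on edges, of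
`(Σ g)/(Σ f²)`. -/
noncomputable def oneDimGap {V : Type*} [Fintype V] (G : SimpleGraph V) : ℝ :=
  sInf {r : ℝ | ∃ f g : V → ℝ, (∑ u, f u) = 0 ∧ (∃ u, f u ≠ 0) ∧
    (∀ u, 0 ≤ g u) ∧ (∀ u v, G.Adj u v → (f u - f v) ^ 2 ≤ g u + g v) ∧
    r = (∑ u, g u) / (∑ u, f u ^ 2)}


lemma le_cutMatchNum {V : Type*} [Fintype V] (G : SimpleGraph V) (S : Finset V)
    (M : Finset (V × V))
    (h1 : ∀ p ∈ M, p.1 ∈ S ∧ p.2 ∉ S ∧ G.Adj p.1 p.2)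
    (h2 : ∀ p ∈ M, ∀ q ∈ M, p ≠ q → p.1 ≠ q.1 ∧ p.1 ≠ q.2 ∧ p.2 ≠ q.1 ∧ p.2 ≠ q.2) :
    M.card ≤ cutMatchNum G S := by
  apply le_csSup
  · refine ⟨Fintype.card (V × V), ?_⟩
    rintro n ⟨M', -, -, rfl⟩
    exact Finset.card_le_univ M'
  · exact ⟨M, h1, h2, rfl⟩

/-- König-type lemma: there is a vertex cover of the cut of size at most the
matching number of the cut. -/
lemma exists_cover {V : Type*} [Fintype V] (G : SimpleGraph V) (S : Finset V) :
    ∃ C : Finset V, C.card ≤ cutMatchNum G S ∧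
      ∀ u v, u ∈ S → v ∉ S → G.Adj u v → u ∈ C ∨ v ∈ C := by
  classical
  set S' : Finset V := S.filter (fun u => ∃ v, v ∉ S ∧ G.Adj u v) with hS'
  set N : Finset V → Finset V :=
    fun W => Finset.univ.filter (fun v => v ∉ S ∧ ∃ u ∈ W, G.Adj u v) with hN
  obtain ⟨W₀, hW₀mem, hW₀max⟩ := S'.powerset.exists_max_image
    (fun W => (W.card : ℤ) - ((N W).card : ℤ)) ⟨∅, mem_powerset.2 (empty_subset _)⟩
  have hW₀S' : W₀ ⊆ S' := mem_powerset.1 hW₀mem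
  have hNempty : N ∅ = ∅ := by simp [hN]
  have hd0 : 0 ≤ (W₀.card : ℤ) - ((N W₀).card : ℤ) := by
    have := hW₀max ∅ (mem_powerset.2 (empty_subset _))
    simpa [hNempty] using this
  set d : ℕ := W₀.card - (N W₀).card with hd
  have hNle : (N W₀).card ≤ W₀.card := by exact_mod_cast sub_nonneg.1 hd0
  have hdcast : (d : ℤ) = (W₀.card : ℤ) - ((N W₀).card : ℤ) := by omega
  -- Hall setup
  set t : ↥S' → Finset (V ⊕ Fin d) :=
    fun u => ((N {(u : V)}).image Sum.inl) ∪ ((Finset.univ : Finset (Fin d)).image Sum.inr)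
    with ht
  have hall : ∀ A : Finset ↥S', A.card ≤ (A.biUnion t).card := by
    intro A
    rcases A.eq_empty_or_nonempty with rfl | ⟨a₀, ha₀⟩
    · simp
    have hsub : ((N (A.image Subtype.val)).image Sum.inl) ∪
        ((Finset.univ : Finset (Fin d)).image Sum.inr) ⊆ A.biUnion t := by
      intro x hx
      rcases mem_union.1 hx with hx | hx
      · obtain ⟨v, hv, rfl⟩ := mem_image.1 hx
        rw [hN, mem_filter] at hv
        obtain ⟨-, hvS, u, huA, hadj⟩ := hv
        obtain ⟨a, haA, rfl⟩ := mem_image.1 huA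
        refine mem_biUnion.2 ⟨a, haA, ?_⟩
        rw [ht]
        refine mem_union_left _ (mem_image.2 ⟨v, ?_, rfl⟩)
        rw [hN, mem_filter]
        exact ⟨mem_univ _, hvS, _, mem_singleton_self _, hadj⟩
      · exact mem_biUnion.2 ⟨a₀, ha₀, mem_union_right _ hx⟩
    have hdisj : Disjoint ((N (A.image Subtype.val)).image Sum.inl)
        ((Finset.univ : Finset (Fin d)).image Sum.inr) := by
      simp [Finset.disjoint_left]
    have hcard1 : A.card = (A.image Subtype.val).card :=
      (card_image_of_injective A Subtype.coe_injective).symm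
    have hsubS' : A.image Subtype.val ⊆ S' := by
      intro x hx
      obtain ⟨a, -, rfl⟩ := mem_image.1 hx
      exact a.2
    have hmax := hW₀max _ (mem_powerset.2 hsubS')
    have hcardU : (((N (A.image Subtype.val)).image Sum.inl) ∪
        ((Finset.univ : Finset (Fin d)).image Sum.inr)).card
        = (N (A.image Subtype.val)).card + d := by
      rw [card_union_of_disjoint hdisj, card_image_of_injective _ Sum.inl_injective,
        card_image_of_injective _ Sum.inr_injective, card_univ, Fintype.card_fin]
    have := card_le_card hsub
    rw [hcardU] at this
    omega
  obtain ⟨F, hFinj, hFmem⟩ := (Finset.all_card_le_biUnion_card_iff_existsInjective' t).1 hall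
  -- extract matching
  set f' : ↥S' → V := fun u => match F u with | .inl v => v | .inr _ => (u : V) with hf'
  set A := Finset.univ.filter (fun u : ↥S' => (F u).isLeft) with hA
  have hFleft : ∀ u ∈ A, F u = Sum.inl (f' u) ∧ f' u ∈ N {(u : V)} := by
    intro u hu
    have hl : (F u).isLeft := (mem_filter.1 hu).2
    obtain ⟨v, hv⟩ := Sum.isLeft_iff.1 hl
    have hFu := hFmem u
    rw [ht, mem_union] at hFu
    rcases hFu with h | h
    · obtain ⟨w, hw, hwv⟩ := mem_image.1 h
      have : F u = Sum.inl w := hwv.symm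
      constructor
      · rw [this, hf']; simp [this]
      · have : f' u = w := by rw [hf']; simp [this]
        rw [this]; exact hw
    · obtain ⟨w, -, hwv⟩ := mem_image.1 h
      rw [← hwv] at hv; simp at hv
  set M : Finset (V × V) := A.image (fun u => (Subtype.val u, f' u)) with hM
  have hprop : ∀ p ∈ M, p.1 ∈ S ∧ p.2 ∉ S ∧ G.Adj p.1 p.2 := by
    rintro p hp
    obtain ⟨u, hu, rfl⟩ := mem_image.1 hp
    obtain ⟨-, hmem⟩ := hFleft u hu
    rw [hN, mem_filter] at hmem
    obtain ⟨-, hvS, w, hw, hadj⟩ := hmem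
    rw [mem_singleton] at hw
    subst hw
    have huS : (u : V) ∈ S := (mem_filter.1 u.2).1
    exact ⟨huS, hvS, hadj⟩
  have hmatch : ∀ p ∈ M, ∀ q ∈ M, p ≠ q →
      p.1 ≠ q.1 ∧ p.1 ≠ q.2 ∧ p.2 ≠ q.1 ∧ p.2 ≠ q.2 := by
    rintro p hp q hq hpq
    obtain ⟨u, hu, rfl⟩ := mem_image.1 hp
    obtain ⟨w, hw, rfl⟩ := mem_image.1 hq
    have huw : u ≠ w := by rintro rfl; exact hpq rfl
    have h1 : (u : V) ≠ (w : V) := fun h => huw (Subtype.coe_injective h)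
    have h2 : f' u ≠ f' w := by
      intro h
      apply huw
      apply hFinj
      rw [(hFleft u hu).1, (hFleft w hw).1, h]
    have hp1 := hprop _ hp
    have hq1 := hprop _ hq
    simp only at hp1 hq1 ⊢
    refine ⟨h1, ?_, ?_, h2⟩
    · intro h; exact hq1.2.1 (h ▸ hp1.1)
    · intro h; exact hp1.2.1 (h ▸ hq1.1)
  have hMcard : M.card = A.card := by
    rw [hM]
    apply card_image_of_injOn
    intro x hx y hy hxy
    exact Subtype.coe_injective (congrArg Prod.fst hxy)
  -- A.card ≥ S'.card - d
  have hAcard : S'.card ≤ A.card + d := by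
    have hright : (Finset.univ.filter (fun u : ↥S' => ¬ (F u).isLeft)).card ≤ d := by
      have : ∀ u ∈ Finset.univ.filter (fun u : ↥S' => ¬ (F u).isLeft),
          ∃ x : Fin d, F u = Sum.inr x := by
        intro u hu
        have := (mem_filter.1 hu).2
        rcases h : F u with v | x
        · rw [h] at this; simp at this
        · exact ⟨x, rfl⟩
      choose φ hφ using this
      have hcard : (Finset.univ.filter (fun u : ↥S' => ¬ (F u).isLeft)).card ≤
          (((Finset.univ : Finset (Fin d))).image (Sum.inr : Fin d → V ⊕ Fin d)).card := by
        apply card_le_card_of_injOn F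
        · intro u hu
          rw [hφ u hu]
          exact mem_image.2 ⟨_, mem_univ _, rfl⟩
        · exact fun a _ b _ h => hFinj h
      rw [card_image_of_injective _ Sum.inr_injective, card_univ, Fintype.card_fin] at hcard
      exact hcard
    have hsplit := card_filter_add_card_filter_not
      (s := (Finset.univ : Finset ↥S')) (p := fun u : ↥S' => (F u).isLeft)
    rw [card_univ, Fintype.card_coe] at hsplit
    simp only [← hA] at hsplit
    omega
  have hν : S'.card ≤ cutMatchNum G S + d := by
    have := le_cutMatchNum G S M hprop hmatch
    omega
  -- the cover
  refine ⟨(S' \ W₀) ∪ N W₀, ?_, ?_⟩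
  · have h1 : ((S' \ W₀) ∪ N W₀).card ≤ (S' \ W₀).card + (N W₀).card := card_union_le _ _
    have h2 : (S' \ W₀).card = S'.card - W₀.card := card_sdiff_of_subset hW₀S'
    have h3 : W₀.card ≤ S'.card := card_le_card hW₀S'
    have h4 : (N W₀).card ≤ W₀.card := by omega
    omega
  · intro u v huS hvS hadj
    have huS' : u ∈ S' := by
      rw [hS', mem_filter]; exact ⟨huS, v, hvS, hadj⟩
    by_cases hu : u ∈ W₀
    · right
      refine mem_union_right _ ?_
      rw [hN, mem_filter]
      exact ⟨mem_univ _, hvS, u, hu, hadj⟩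
    · exact Or.inl (mem_union_left _ (mem_sdiff.2 ⟨huS', hu⟩))

lemma oneDimSet_nonneg {V : Type*} [Fintype V] (G : SimpleGraph V) :
    ∀ r ∈ {r : ℝ | ∃ f g : V → ℝ, (∑ u, f u) = 0 ∧ (∃ u, f u ≠ 0) ∧
      (∀ u, 0 ≤ g u) ∧ (∀ u v, G.Adj u v → (f u - f v) ^ 2 ≤ g u + g v) ∧
      r = (∑ u, g u) / (∑ u, f u ^ 2)}, 0 ≤ r := by
  rintro r ⟨f, g, -, -, hg, -, rfl⟩
  apply div_nonneg (Finset.sum_nonneg fun u _ => hg u)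
    (Finset.sum_nonneg fun u _ => sq_nonneg _)

set_option maxHeartbeats 1000000 in
lemma key_bound {V : Type*} [Fintype V] (G : SimpleGraph V) (S : Finset V)
    (hS : S.Nonempty) (hhalf : 2 * S.card ≤ Fintype.card V) :
    oneDimGap G ≤ 2 * ((cutMatchNum G S : ℝ) / S.card) := by
  classical
  obtain ⟨C, hCcard, hCcover⟩ := exists_cover G S
  set s : ℕ := S.card with hs
  set t : ℕ := Fintype.card V - S.card with htdef
  have hs1 : 1 ≤ s := hS.card_pos
  have hsn : s ≤ Fintype.card V := by
    calc s ≤ 2 * s := by omega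
    _ ≤ _ := hhalf
  have hst : s ≤ t := by omega
  set f : V → ℝ := fun u => if u ∈ S then (t : ℝ) else -(s : ℝ) with hf
  set g : V → ℝ := fun u => if u ∈ C then ((s : ℝ) + t) ^ 2 else 0 with hg
  have hcompl : Sᶜ.card = t := by rw [Finset.card_compl]
  have hsumf : (∑ u, f u) = 0 := by
    rw [← Finset.sum_add_sum_compl S f]
    have h1 : ∑ u ∈ S, f u = (s : ℝ) * t := by
      have e : ∑ u ∈ S, f u = ∑ _u ∈ S, (t : ℝ) :=
        Finset.sum_congr rfl (fun u hu => by simp [hf, hu])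
      rw [e, Finset.sum_const, ← hs, nsmul_eq_mul]
    have h2 : ∑ u ∈ Sᶜ, f u = (t : ℝ) * (-(s:ℝ)) := by
      have e : ∑ u ∈ Sᶜ, f u = ∑ _u ∈ Sᶜ, (-(s:ℝ)) :=
        Finset.sum_congr rfl (fun u hu => by simp [hf, Finset.mem_compl.1 hu])
      rw [e, Finset.sum_const, hcompl, nsmul_eq_mul]
    rw [h1, h2]; ring
  have hsumf2 : (∑ u, f u ^ 2) = (s : ℝ) * t ^ 2 + (t : ℝ) * s ^ 2 := by
    rw [← Finset.sum_add_sum_compl S]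
    have h1 : ∑ u ∈ S, f u ^ 2 = (s : ℝ) * t ^ 2 := by
      have e : ∑ u ∈ S, f u ^ 2 = ∑ _u ∈ S, ((t : ℝ)) ^ 2 :=
        Finset.sum_congr rfl (fun u hu => by simp [hf, hu])
      rw [e, Finset.sum_const, ← hs, nsmul_eq_mul]
    have h2 : ∑ u ∈ Sᶜ, f u ^ 2 = (t : ℝ) * s ^ 2 := by
      have e : ∑ u ∈ Sᶜ, f u ^ 2 = ∑ _u ∈ Sᶜ, ((s:ℝ)) ^ 2 :=
        Finset.sum_congr rfl (fun u hu => by simp [hf, Finset.mem_compl.1 hu])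
      rw [e, Finset.sum_const, hcompl, nsmul_eq_mul]
    rw [h1, h2]
  have hsumg : (∑ u, g u) = (C.card : ℝ) * ((s : ℝ) + t) ^ 2 := by
    rw [hg, ← Finset.sum_filter, Finset.filter_univ_mem, Finset.sum_const]
    simp
  have hgnn : ∀ u, 0 ≤ g u := by
    intro u; rw [hg]; dsimp only; split
    · positivity
    · exact le_refl _
  have hedge : ∀ u v, G.Adj u v → (f u - f v) ^ 2 ≤ g u + g v := by
    intro u v hadj
    by_cases hu : u ∈ S <;> by_cases hv : v ∈ S
    · simp only [hf, hu, hv, if_pos]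
      have := hgnn u; have := hgnn v
      simp only [if_pos hu, if_pos hv, sub_self]
      nlinarith [hgnn u, hgnn v]
    · have hcov := hCcover u v hu hv hadj
      have hjump : (f u - f v) ^ 2 = ((s : ℝ) + t) ^ 2 := by
        simp only [hf, if_pos hu, if_neg hv]; ring
      rw [hjump]
      rcases hcov with h | h
      · have : g u = ((s : ℝ) + t) ^ 2 := by simp [hg, h]
        nlinarith [hgnn v]
      · have : g v = ((s : ℝ) + t) ^ 2 := by simp [hg, h]
        nlinarith [hgnn u]
    · have hcov := hCcover v u hv hu hadj.symm
      have hjump : (f u - f v) ^ 2 = ((s : ℝ) + t) ^ 2 := by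
        simp only [hf, if_neg hu, if_pos hv]; ring
      rw [hjump]
      rcases hcov with h | h
      · have : g v = ((s : ℝ) + t) ^ 2 := by simp [hg, h]
        nlinarith [hgnn u]
      · have : g u = ((s : ℝ) + t) ^ 2 := by simp [hg, h]
        nlinarith [hgnn v]
    · have : f u - f v = 0 := by simp [hf, if_neg hu, if_neg hv]
      rw [this]
      nlinarith [hgnn u, hgnn v]
  have hfne : ∃ u, f u ≠ 0 := by
    obtain ⟨u, hu⟩ := hS
    refine ⟨u, ?_⟩
    simp only [hf, if_pos hu]
    have : (1 : ℝ) ≤ (t : ℝ) := by exact_mod_cast le_trans hs1 hst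
    positivity
  have hmem : (∑ u, g u) / (∑ u, f u ^ 2) ∈ {r : ℝ | ∃ f g : V → ℝ, (∑ u, f u) = 0 ∧
      (∃ u, f u ≠ 0) ∧ (∀ u, 0 ≤ g u) ∧
      (∀ u v, G.Adj u v → (f u - f v) ^ 2 ≤ g u + g v) ∧
      r = (∑ u, g u) / (∑ u, f u ^ 2)} := ⟨f, g, hsumf, hfne, hgnn, hedge, rfl⟩
  have hle : oneDimGap G ≤ (∑ u, g u) / (∑ u, f u ^ 2) :=
    csInf_le ⟨0, fun r hr => oneDimSet_nonneg G r hr⟩ hmem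
  refine hle.trans ?_
  rw [hsumg, hsumf2]
  -- ratio bound
  have hsR : (1 : ℝ) ≤ (s : ℝ) := by exact_mod_cast hs1
  have htR : (s : ℝ) ≤ (t : ℝ) := by exact_mod_cast hst
  have hCR : (C.card : ℝ) ≤ (cutMatchNum G S : ℝ) := by exact_mod_cast hCcard
  have hden : (0 : ℝ) < (s : ℝ) * t ^ 2 + (t : ℝ) * s ^ 2 := by nlinarith
  have hspos : (0 : ℝ) < (s : ℝ) := by linarith
  rw [show (2:ℝ) * ((cutMatchNum G S : ℝ) / (s:ℝ))
    = (2 * (cutMatchNum G S : ℝ)) / (s:ℝ) by ring, div_le_div_iff₀ hden hspos]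
  have hm0 : (0 : ℝ) ≤ (cutMatchNum G S : ℝ) := Nat.cast_nonneg _
  nlinarith [mul_le_mul_of_nonneg_right hCR (by positivity : (0:ℝ) ≤ ((s:ℝ)+t)^2 * (s:ℝ)),
    mul_nonneg hm0 (by nlinarith : (0:ℝ) ≤ ((s:ℝ)+t) * ((t:ℝ) - s) * (s:ℝ))]

/-- Easy direction of the matching-conductance Cheeger inequality: `λ*(G) ≤ 2·Υ*(G)`. -/
theorem oneDimGap_le_two_mul_matchCond {V : Type*} [Fintype V] (G : SimpleGraph V) :
    oneDimGap G ≤ 2 * matchCond G := by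
  by_cases hn : ∃ S : Finset V, S.Nonempty ∧ 2 * S.card ≤ Fintype.card V
  · obtain ⟨S₀, hS₀, hhalf₀⟩ := hn
    have hne : {r : ℝ | ∃ S : Finset V, S.Nonempty ∧ 2 * S.card ≤ Fintype.card V ∧
        r = (cutMatchNum G S : ℝ) / S.card}.Nonempty :=
      ⟨_, S₀, hS₀, hhalf₀, rfl⟩
    have hlow : oneDimGap G / 2 ≤ matchCond G := by
      apply le_csInf hne
      rintro r ⟨S, hS, hhalf, rfl⟩
      have := key_bound G S hS hhalf
      linarith
    linarith
  · have h2 : {r : ℝ | ∃ S : Finset V, S.Nonempty ∧ 2 * S.card ≤ Fintype.card V ∧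
        r = (cutMatchNum G S : ℝ) / S.card} = ∅ := by
      ext r
      simp only [Set.mem_setOf_eq, Set.mem_empty_iff_false, iff_false]
      rintro ⟨S, h1, hh, -⟩
      exact hn ⟨S, h1, hh⟩
    have h1 : {r : ℝ | ∃ f g : V → ℝ, (∑ u, f u) = 0 ∧ (∃ u, f u ≠ 0) ∧
        (∀ u, 0 ≤ g u) ∧ (∀ u v, G.Adj u v → (f u - f v) ^ 2 ≤ g u + g v) ∧
        r = (∑ u, g u) / (∑ u, f u ^ 2)} = ∅ := by
      ext r
      simp only [Set.mem_setOf_eq, Set.mem_empty_iff_false, iff_false]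
      rintro ⟨f, g, hsum, ⟨u, hu⟩, -, -, -⟩
      have hcard : Fintype.card V ≤ 1 := by
        by_contra hc
        push_neg at hc
        exact hn ⟨{u}, Finset.singleton_nonempty u, by rw [Finset.card_singleton]; omega⟩
      have huniv : (Finset.univ : Finset V) = {u} :=
        Finset.eq_singleton_iff_unique_mem.2
          ⟨Finset.mem_univ u, fun x _ => Fintype.card_le_one_iff.1 hcard x u⟩
      rw [huniv, Finset.sum_singleton] at hsum
      exact hu hsum
    rw [oneDimGap, matchCond, h1, h2, Real.sInf_empty]
    norm_num
end
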